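/- arXiv:math/0504365 — 5 statements merged into one kernel-verified Lean document; each statement's English description precedes it below -/
import Mathlib

section
/- Let Φ : ℝⁿ × ℝ → ℝⁿ be a C² map (a C² action of ℝ on ℝⁿ). Suppose there exist x₀ ∈ ℝⁿ and t₀ ∈ ℝ such that the partial derivative ∂Φ/∂t(x₀, t₀) = 0, and suppose the mixed partial derivative ∂²Φ/∂x∂t(x₀, t₀) (i.e., the total derivative in x at x₀ of the map x ↦ ∂Φ/∂t(x, t₀), viewed as a linear map ℝⁿ → ℝⁿ) is non-singular. Then for every ε > 0 there exist z₀ ∈ ℝⁿ, τ₀ ∈ ℝ, and δ > 0 such that Φ(z₀, τ₀) = Φ(z₀, τ₀ + δ) and ‖Φ(z₀, t) − Φ(x₀, t₀)‖ < ε for all t with τ₀ ≤ t < τ₀ + δ. -/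
open intervalIntegral Metric Filter Topology

section Aux
variable {n : ℕ}
local notation "E" => EuclideanSpace ℝ (Fin n)

set_option maxHeartbeats 1000000 in
theorem aux_main (Φ : E × ℝ → E) (hΦ : ContDiff ℝ 2 Φ)
    (x₀ : E) (t₀ : ℝ)
    (hstat : deriv (fun s => Φ (x₀, s)) t₀ = 0)
    (hns : Function.Bijective
      ⇑(fderiv ℝ (fun x => deriv (fun s => Φ (x, s)) t₀) x₀)) :
    ∀ ε > 0, ∃ (z₀ : E) (τ₀ δ : ℝ), 0 < δ ∧
      Φ (z₀, τ₀) = Φ (z₀, τ₀ + δ) ∧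
      ∀ t, τ₀ ≤ t → t < τ₀ + δ → ‖Φ (z₀, t) - Φ (x₀, t₀)‖ < ε := by
  -- the time-derivative of Φ
  set D : E × ℝ → E := fun p => fderiv ℝ Φ p (0, 1) with hDdef
  have hD1 : ContDiff ℝ 1 D :=
    (hΦ.fderiv_right (m := 1) (by norm_num)).clm_apply contDiff_const
  have hΦdiff : Differentiable ℝ Φ := hΦ.differentiable (by norm_num)
  have hderiv : ∀ (x : E) (t : ℝ), HasDerivAt (fun s => Φ (x, s)) (D (x, t)) t := by
    intro x t
    have h1 : HasFDerivAt Φ (fderiv ℝ Φ (x, t)) (x, t) := (hΦdiff (x, t)).hasFDerivAt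
    have h2 : HasDerivAt (fun s : ℝ => ((x, s) : E × ℝ)) ((0 : E), (1 : ℝ)) t :=
      (hasDerivAt_const t x).prodMk (hasDerivAt_id t)
    exact h1.comp_hasDerivAt t h2
  have hD0 : D (x₀, t₀) = 0 := ((hderiv x₀ t₀).deriv).symm.trans hstat
  have hDdiff : Differentiable ℝ D := hD1.differentiable one_ne_zero
  -- the mixed derivative A
  set A : E →L[ℝ] E := (fderiv ℝ D (x₀, t₀)).comp (ContinuousLinearMap.inl ℝ E ℝ) with hAdef
  have hA : HasFDerivAt (fun x : E => D (x, t₀)) A x₀ :=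
    by
      have h0 : HasFDerivAt (fun x : E => ((x, t₀) : E × ℝ)) (ContinuousLinearMap.inl ℝ E ℝ) x₀ :=
        (hasFDerivAt_id x₀).prodMk (hasFDerivAt_const t₀ x₀)
      exact ((hDdiff (x₀, t₀)).hasFDerivAt).comp x₀ h0
  have hAbij : Function.Bijective ⇑A := by
    have he : (fun x : E => deriv (fun s => Φ (x, s)) t₀) = fun x : E => D (x, t₀) :=
      funext fun x => (hderiv x t₀).deriv
    rw [he, hA.fderiv] at hns
    exact hns
  -- the rescaling linear maps
  set A₁ : (E × ℝ) →L[ℝ] (E × ℝ) :=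
    (0 : (E × ℝ) →L[ℝ] E).prod (ContinuousLinearMap.snd ℝ E ℝ) with hA₁def
  set L : ℝ → (E × ℝ) →L[ℝ] (E × ℝ) := fun s =>
    (ContinuousLinearMap.fst ℝ E ℝ).prod (0 : (E × ℝ) →L[ℝ] ℝ) + (2 * s - 1) • A₁ with hLdef
  have hLapp : ∀ (s : ℝ) (w : E × ℝ), L s w = (w.1, (2 * s - 1) * w.2) := by
    intro s w
    simp [hLdef, hA₁def, Prod.ext_iff, smul_eq_mul]
  have hLC : Continuous L := by
    apply Continuous.add continuous_const
    exact (by continuity : Continuous fun s : ℝ => (2 * s - 1)).smul continuous_const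
  set σ : (E × ℝ) → ℝ → E × ℝ := fun p s => (p.1, t₀ + (2 * s - 1) * p.2) with hσdef
  have hσC : Continuous (fun q : (E × ℝ) × ℝ => σ q.1 q.2) := by
    apply Continuous.prodMk (continuous_fst.fst)
    fun_prop
  have hσderiv : ∀ (p : E × ℝ) (s : ℝ), HasFDerivAt (fun q => σ q s) (L s) p := by
    intro p s
    have h1 : HasFDerivAt (fun q : E × ℝ => (q.1, t₀ + (2 * s - 1) * q.2))
        ((ContinuousLinearMap.fst ℝ E ℝ).prod
          ((2 * s - 1) • ContinuousLinearMap.snd ℝ E ℝ)) p :=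
      (hasFDerivAt_fst).prodMk ((hasFDerivAt_snd.const_mul (2 * s - 1)).const_add t₀)
    convert h1 using 1
    refine ContinuousLinearMap.ext fun w => ?_
    rw [hLapp]
    simp [Prod.ext_iff, smul_eq_mul]
  set F : (E × ℝ) → ℝ → E := fun p s => D (σ p s) with hFdef
  set F' : (E × ℝ) → ℝ → (E × ℝ) →L[ℝ] E := fun p s => (fderiv ℝ D (σ p s)).comp (L s)
    with hF'def
  have hFC : Continuous (fun q : (E × ℝ) × ℝ => F q.1 q.2) := hD1.continuous.comp hσC
  have hfderivDC : Continuous (fderiv ℝ D) := (hD1.fderiv_right (m := 0) le_rfl).continuous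
  have hF'C : Continuous (fun q : (E × ℝ) × ℝ => F' q.1 q.2) :=
    (hfderivDC.comp hσC).clm_comp (hLC.comp continuous_snd)
  have hFcont : ∀ p, Continuous (F p) := fun p => hFC.comp (Continuous.prodMk_right p)
  have hF'cont : ∀ p, Continuous (F' p) := fun p => hF'C.comp (Continuous.prodMk_right p)
  have hF'deriv : ∀ (p : E × ℝ) (s : ℝ), HasFDerivAt (fun q => F q s) (F' p s) p := fun p s => by
    have h := ((hDdiff (σ p s)).hasFDerivAt).comp p (hσderiv p s)
    exact h
  set g : (E × ℝ) → E := fun p => ∫ s in (0:ℝ)..1, F p s with hgdef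
  set g' : (E × ℝ) → (E × ℝ) →L[ℝ] E := fun p => ∫ s in (0:ℝ)..1, F' p s with hg'def
  have hgderiv : ∀ p, HasFDerivAt g (g' p) p := by
    intro p
    -- a compact set containing all relevant points
    set K : Set (E × ℝ) :=
      (fun q : (E × ℝ) × ℝ => σ q.1 q.2) '' (Metric.closedBall p 1 ×ˢ Set.Icc (0:ℝ) 1)
      with hKdef
    have hKcomp : IsCompact K :=
      ((isCompact_closedBall p 1).prod isCompact_Icc).image hσC
    obtain ⟨M, hM⟩ := hKcomp.exists_bound_of_continuousOn hfderivDC.continuousOn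
    have hbound : ∀ᵐ s ∂(MeasureTheory.volume), s ∈ Set.uIoc (0:ℝ) 1 →
        ∀ q ∈ Metric.ball p 1, ‖F' q s‖ ≤ max M 0 := by
      refine Filter.Eventually.of_forall fun s hs q hq => ?_
      rw [Set.uIoc_of_le zero_le_one] at hs
      have hsIcc : s ∈ Set.Icc (0:ℝ) 1 := ⟨le_of_lt hs.1, hs.2⟩
      have habs : |2 * s - 1| ≤ 1 := by
        rw [abs_le]; constructor <;> nlinarith [hsIcc.1, hsIcc.2]
      have hmem : σ q s ∈ K := ⟨(q, s), ⟨Metric.ball_subset_closedBall hq, hsIcc⟩, rfl⟩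
      refine ContinuousLinearMap.opNorm_le_bound _ (le_max_right M 0) fun w => ?_
      have h1 : ‖(F' q s) w‖ ≤ ‖fderiv ℝ D (σ q s)‖ * ‖L s w‖ :=
        (fderiv ℝ D (σ q s)).le_opNorm (L s w)
      have h2 : ‖L s w‖ ≤ ‖w‖ := by
        rw [hLapp]
        rw [Prod.norm_def, Prod.norm_def]
        apply max_le
        · exact le_max_left _ _
        · calc ‖(2 * s - 1) * w.2‖ = |2 * s - 1| * ‖w.2‖ := by
                rw [norm_mul, Real.norm_eq_abs]
          _ ≤ 1 * ‖w.2‖ := by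
                exact mul_le_mul_of_nonneg_right habs (norm_nonneg _)
          _ = ‖w.2‖ := one_mul _
          _ ≤ max ‖w.1‖ ‖w.2‖ := le_max_right _ _
      calc ‖(F' q s) w‖ ≤ ‖fderiv ℝ D (σ q s)‖ * ‖L s w‖ := h1
        _ ≤ max M 0 * ‖w‖ := by
            exact mul_le_mul (le_trans (hM _ hmem) (le_max_left M 0)) h2
              (norm_nonneg _) (le_max_right M 0)
    exact intervalIntegral.hasFDerivAt_integral_of_dominated_of_fderiv_le
      (Metric.ball_mem_nhds p one_pos)
      (Filter.Eventually.of_forall fun q => (hFcont q).aestronglyMeasurable)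
      ((hFcont p).intervalIntegrable 0 1)
      ((hF'cont p).aestronglyMeasurable)
      hbound
      intervalIntegrable_const
      (Filter.Eventually.of_forall fun s _ q _ => hF'deriv q s)
  have hg'C : Continuous g' :=
    continuous_parametric_intervalIntegral_of_continuous' (f := F') hF'C 0 1
  have hgstrict : HasStrictFDerivAt g (g' (x₀, 0)) (x₀, 0) :=
    hasStrictFDerivAt_of_hasFDerivAt_of_continuousAt
      (Filter.Eventually.of_forall fun q => hgderiv q) hg'C.continuousAt
  -- value of `g` and `g'` at the base point
  have hσx₀ : ∀ s : ℝ, σ (x₀, 0) s = (x₀, t₀) := by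
    intro s; simp [hσdef]
  have hg0 : g (x₀, 0) = 0 := by
    rw [hgdef]
    simp only [hFdef, hσx₀]
    simp [hD0]
  have hg'app : ∀ w : E × ℝ, g' (x₀, 0) w = A w.1 := by
    intro w
    have hInt : IntervalIntegrable (F' (x₀, 0)) MeasureTheory.volume 0 1 :=
      (hF'cont _).intervalIntegrable 0 1
    have h1 : g' (x₀, 0) w = ∫ s in (0:ℝ)..1, F' (x₀, 0) s w := by
      rw [hg'def]
      exact ((ContinuousLinearMap.apply ℝ E w).intervalIntegral_comp_comm hInt).symm
    rw [h1]
    have h2 : ∀ s : ℝ, F' (x₀, 0) s w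
        = fderiv ℝ D (x₀, t₀) ((w.1, 0) + (2 * s - 1) • ((0 : E), w.2)) := by
      intro s
      rw [hF'def]
      simp only [ContinuousLinearMap.comp_apply, hσx₀, hLapp]
      congr 1
      simp [Prod.ext_iff, smul_eq_mul]
    simp only [h2]
    have hcs : Continuous (fun s : ℝ => 2 * s - 1) :=
      (continuous_const.mul continuous_id).sub continuous_const
    have hc2 : Continuous (fun s : ℝ => (2 * s - 1) • (((0 : E), w.2) : E × ℝ)) :=
      hcs.smul continuous_const
    have hInt2 : IntervalIntegrable
        (fun s : ℝ => ((w.1, 0) + (2 * s - 1) • ((0 : E), w.2) : E × ℝ))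
        MeasureTheory.volume 0 1 :=
      (continuous_const.add hc2).intervalIntegrable 0 1
    rw [(fderiv ℝ D (x₀, t₀)).intervalIntegral_comp_comm hInt2]
    have h3 : (∫ s in (0:ℝ)..1, ((w.1, 0) + (2 * s - 1) • ((0 : E), w.2) : E × ℝ))
        = (w.1, 0) := by
      rw [intervalIntegral.integral_add intervalIntegrable_const
        (hc2.intervalIntegrable 0 1)]
      rw [intervalIntegral.integral_smul_const]
      have h4 : (∫ s in (0:ℝ)..1, (2 * s - 1)) = 0 := by
        have h5 : (∫ s in (0:ℝ)..1, (2 * s - 1))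
            = (∫ s in (0:ℝ)..1, 2 * s) - ∫ s in (0:ℝ)..1, (1:ℝ) :=
          intervalIntegral.integral_sub
            (Continuous.intervalIntegrable (by fun_prop) 0 1) intervalIntegrable_const
        rw [h5, intervalIntegral.integral_const_mul, integral_id]
        norm_num
      rw [h4]
      simp
    rw [h3, hAdef]
    rfl
  -- the full map and its invertible derivative
  set T : (E × ℝ) →L[ℝ] (E × ℝ) := (g' (x₀, 0)).prod (ContinuousLinearMap.snd ℝ E ℝ)
    with hTdef
  have hTapp : ∀ w : E × ℝ, T w = (A w.1, w.2) := by
    intro w; rw [hTdef]; simp [hg'app w]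
  have hTbij : Function.Bijective ⇑T := by
    constructor
    · intro w w' hw
      rw [hTapp, hTapp, Prod.ext_iff] at hw
      exact Prod.ext (hAbij.injective hw.1) hw.2
    · rintro ⟨pu, pv⟩
      obtain ⟨u, hu⟩ := hAbij.surjective pu
      exact ⟨(u, pv), by rw [hTapp]; simp [hu]⟩
  set Teq : (E × ℝ) ≃L[ℝ] (E × ℝ) :=
    (LinearEquiv.ofBijective (↑T : (E × ℝ) →ₗ[ℝ] (E × ℝ)) hTbij).toContinuousLinearEquiv
    with hTeqdef
  set h : (E × ℝ) → (E × ℝ) := fun p => (g p, p.2) with hhdef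
  have hhstrict : HasStrictFDerivAt h (Teq : (E × ℝ) →L[ℝ] (E × ℝ)) (x₀, 0) := by
    have h1 : HasStrictFDerivAt h T (x₀, 0) :=
      hgstrict.prodMk (ContinuousLinearMap.snd ℝ E ℝ).hasStrictFDerivAt
    have h2 : (Teq : (E × ℝ) →L[ℝ] (E × ℝ)) = T :=
      ContinuousLinearMap.ext fun w => rfl
    rwa [h2]
  have hh0 : h (x₀, 0) = (0, 0) := by
    rw [hhdef]; simp [hg0]
  set ψ : (E × ℝ) → (E × ℝ) := hhstrict.localInverse h Teq (x₀, 0) with hψdef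
  have hrinv : ∀ᶠ y in 𝓝 (((0 : E), (0 : ℝ)) : E × ℝ), h (ψ y) = y := by
    have := hhstrict.eventually_right_inverse
    rwa [hh0] at this
  have hψcont : ContinuousAt ψ ((0 : E), (0 : ℝ)) := by
    have := hhstrict.localInverse_continuousAt
    rwa [hh0] at this
  have hψ0 : ψ ((0 : E), (0 : ℝ)) = (x₀, 0) := by
    have := hhstrict.localInverse_apply_image
    rwa [hh0] at this
  intro ε hε
  obtain ⟨r, hr, hball⟩ :=
    Metric.continuousAt_iff.1 (hΦ.continuous.continuousAt (x := ((x₀, t₀) : E × ℝ))) ε hε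
  have hj : Filter.Tendsto (fun δ : ℝ => (((0 : E), δ) : E × ℝ)) (nhdsWithin 0 (Set.Ioi 0))
      (𝓝 (((0 : E), (0 : ℝ)) : E × ℝ)) :=
    ((Continuous.prodMk_right (0 : E)).tendsto 0).mono_left nhdsWithin_le_nhds
  have E1 : ∀ᶠ δ in nhdsWithin (0:ℝ) (Set.Ioi 0),
      h (ψ ((0 : E), δ)) = ((0 : E), δ) := hj.eventually hrinv
  have E2 : ∀ᶠ δ in nhdsWithin (0:ℝ) (Set.Ioi 0),
      dist (ψ ((0 : E), δ)) (((x₀, 0)) : E × ℝ) < r := by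
    have h6 : Filter.Tendsto (fun δ : ℝ => ψ ((0 : E), δ)) (nhdsWithin 0 (Set.Ioi 0))
        (𝓝 (((x₀, 0)) : E × ℝ)) := by
      have := hψcont.tendsto.comp hj
      rwa [hψ0] at this
    exact h6 (Metric.ball_mem_nhds _ hr)
  have E3 : ∀ᶠ δ in nhdsWithin (0:ℝ) (Set.Ioi 0), δ < r :=
    (eventually_lt_nhds hr).filter_mono nhdsWithin_le_nhds
  have E4 : ∀ᶠ δ in nhdsWithin (0:ℝ) (Set.Ioi 0), 0 < δ := self_mem_nhdsWithin
  obtain ⟨δ, ⟨hE1, hE2⟩, hE3, hE4⟩ := ((E1.and E2).and (E3.and E4)).exists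
  set p : E × ℝ := ψ ((0 : E), δ) with hpdef
  have hp2 : p.2 = δ := congrArg Prod.snd hE1
  have hgp : g p = 0 := congrArg Prod.fst hE1
  have hpz : p = (p.1, δ) := by rw [← hp2]
  have hgz : g (p.1, δ) = 0 := by rw [← hpz]; exact hgp
  have hcurve : ∀ s ∈ Set.uIcc (0:ℝ) 1,
      HasDerivAt (fun s : ℝ => Φ (p.1, t₀ + (2 * s - 1) * δ))
        ((2 * δ) • F (p.1, δ) s) s := by
    intro s _
    have hin : HasDerivAt (fun s : ℝ => t₀ + (2 * s - 1) * δ) (2 * δ) s := by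
      have h7 : HasDerivAt (fun s : ℝ => (2 * s - 1) * δ) (2 * δ) s := by
        have := (((hasDerivAt_id s).const_mul 2).sub_const 1).mul_const δ
        simpa using this
      simpa using h7.const_add t₀
    have hout := hderiv p.1 (t₀ + (2 * s - 1) * δ)
    exact hout.scomp s hin
  have hcont2 : Continuous fun s : ℝ => (2 * δ) • F (p.1, δ) s :=
    (hFcont (p.1, δ)).const_smul (2 * δ)
  have hint3 := intervalIntegral.integral_eq_sub_of_hasDerivAt hcurve
    (hcont2.intervalIntegrable 0 1)
  rw [intervalIntegral.integral_smul] at hint3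
  have hloop : Φ (p.1, t₀ + δ) = Φ (p.1, t₀ - δ) := by
    have h9 : ((2:ℝ) * δ) • g (p.1, δ)
        = Φ (p.1, t₀ + (2 * 1 - 1) * δ) - Φ (p.1, t₀ + (2 * 0 - 1) * δ) := hint3
    rw [hgz, smul_zero] at h9
    have h10 : t₀ + (2 * 1 - 1) * δ = t₀ + δ := by ring
    have h11 : t₀ + (2 * 0 - 1) * δ = t₀ - δ := by ring
    rw [h10, h11] at h9
    exact sub_eq_zero.1 h9.symm
  refine ⟨p.1, t₀ - δ, 2 * δ, by linarith, ?_, ?_⟩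
  · have h12 : t₀ - δ + 2 * δ = t₀ + δ := by ring
    rw [h12, hloop]
  · intro t ht1 ht2
    have hd0 : dist p.1 x₀ ≤ dist p (((x₀, 0)) : E × ℝ) := by
      rw [Prod.dist_eq]; exact le_max_left _ _
    have hd1 : dist p.1 x₀ < r := lt_of_le_of_lt hd0 hE2
    have hd : dist ((p.1, t) : E × ℝ) ((x₀, t₀) : E × ℝ) < r := by
      rw [Prod.dist_eq]
      apply max_lt hd1
      rw [Real.dist_eq, abs_lt]
      constructor <;> linarith
    have h13 := hball hd
    rwa [dist_eq_norm] at h13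
end Aux

/-- **Loops near stationary points of a C² action.**
Let `Φ : ℝⁿ × ℝ → ℝⁿ` be `C²`.  If `∂Φ/∂t (x₀, t₀) = 0` and the mixed partial
derivative `∂²Φ/∂x∂t (x₀, t₀)` (the derivative in `x` at `x₀` of
`x ↦ ∂Φ/∂t (x, t₀)`) is non-singular, then for every `ε > 0` there is a loop
`Φ (z₀, τ₀) = Φ (z₀, τ₀ + δ)`, `δ > 0`, staying `ε`-close to `Φ (x₀, t₀)`. -/
theorem loops_near_stationary_points
    (n : ℕ) (Φ : EuclideanSpace ℝ (Fin n) × ℝ → EuclideanSpace ℝ (Fin n))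
    (hΦ : ContDiff ℝ 2 Φ)
    (x₀ : EuclideanSpace ℝ (Fin n)) (t₀ : ℝ)
    (hstat : deriv (fun s => Φ (x₀, s)) t₀ = 0)
    (hns : Function.Bijective
      ⇑(fderiv ℝ (fun x => deriv (fun s => Φ (x, s)) t₀) x₀)) :
    ∀ ε > 0, ∃ (z₀ : EuclideanSpace ℝ (Fin n)) (τ₀ δ : ℝ), 0 < δ ∧
      Φ (z₀, τ₀) = Φ (z₀, τ₀ + δ) ∧
      ∀ t, τ₀ ≤ t → t < τ₀ + δ → ‖Φ (z₀, t) - Φ (x₀, t₀)‖ < ε :=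
  aux_main Φ hΦ x₀ t₀ hstat hns
end

section
/- Let Φ : ℝⁿ × ℝ → ℝⁿ be a C² map, and let x₀ ∈ ℝⁿ, t₀ ∈ ℝ satisfy ∂Φ/∂t(x₀, t₀) = 0, with the linear map ∂²Φ/∂x∂t(x₀, t₀) : ℝⁿ → ℝⁿ (the derivative in x at x₀ of x ↦ ∂Φ/∂t(x, t₀)) non-singular. Then there exist η > 0 and a continuous map z : (−η, η) → ℝⁿ with z(0) = x₀ such that for every δ ∈ (−η, η), Φ(z(δ), t₀ + δ) = Φ(z(δ), t₀ − δ). In particular, for every 0 < δ < η the point z(δ) gives a loop of period 2δ, and z(δ) → x₀ as δ → 0. -/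
open Metric intervalIntegral Set ContinuousLinearMap

private noncomputable def Mmap (n : ℕ) (u : ℝ) : (EuclideanSpace ℝ (Fin n) × ℝ) →L[ℝ] (EuclideanSpace ℝ (Fin n) × ℝ) :=
  (ContinuousLinearMap.fst ℝ (EuclideanSpace ℝ (Fin n)) ℝ).prod
    ((2*u-1) • ContinuousLinearMap.snd ℝ (EuclideanSpace ℝ (Fin n)) ℝ)

private lemma Mmap_cont (n : ℕ) : Continuous (Mmap n) := by
  have : Mmap n = fun u => (ContinuousLinearMap.prodₗᵢ (𝕜 := ℝ)
      (E := EuclideanSpace ℝ (Fin n) × ℝ) (F := EuclideanSpace ℝ (Fin n)) (G := ℝ) ℝ)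
      (ContinuousLinearMap.fst ℝ (EuclideanSpace ℝ (Fin n)) ℝ,
       (2*u-1) • ContinuousLinearMap.snd ℝ (EuclideanSpace ℝ (Fin n)) ℝ) := rfl
  rw [this]
  exact (ContinuousLinearMap.prodₗᵢ (𝕜 := ℝ)
      (E := EuclideanSpace ℝ (Fin n) × ℝ) (F := EuclideanSpace ℝ (Fin n)) (G := ℝ) ℝ).continuous.comp
    (continuous_const.prodMk (((continuous_const.mul continuous_id).sub continuous_const).smul
      continuous_const))

set_option maxHeartbeats 1000000 in
private lemma G_contDiff (n : ℕ) (D : EuclideanSpace ℝ (Fin n) × ℝ → EuclideanSpace ℝ (Fin n))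
    (hD : ContDiff ℝ 1 D) (t₀ : ℝ) :
    ContDiff ℝ 1 (fun p : EuclideanSpace ℝ (Fin n) × ℝ =>
      ∫ u in (0:ℝ)..1, D (p.1, t₀ + (2*u - 1) * p.2)) := by
  have hF'c : Continuous (fun q : (EuclideanSpace ℝ (Fin n) × ℝ) × ℝ =>
      (fderiv ℝ D (q.1.1, t₀ + (2*q.2-1)*q.1.2)).comp (Mmap n q.2)) := by
    apply Continuous.clm_comp
    · exact (hD.continuous_fderiv (by norm_num)).comp (by fun_prop)
    · exact (Mmap_cont n).comp continuous_snd
  have hinner : ∀ (u : ℝ) (x : EuclideanSpace ℝ (Fin n) × ℝ),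
      HasFDerivAt (fun q : EuclideanSpace ℝ (Fin n) × ℝ =>
        ((q.1, t₀ + (2*u-1)*q.2) : EuclideanSpace ℝ (Fin n) × ℝ)) (Mmap n u) x := by
    intro u x
    apply HasFDerivAt.prodMk (hasFDerivAt_fst)
    simpa using ((hasFDerivAt_snd (𝕜 := ℝ) (p := x)).const_mul (2*u-1)).const_add t₀
  have hdiffF : ∀ (u : ℝ) (x : EuclideanSpace ℝ (Fin n) × ℝ),
      HasFDerivAt (fun q : EuclideanSpace ℝ (Fin n) × ℝ => D (q.1, t₀ + (2*u-1)*q.2))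
        ((fderiv ℝ D (x.1, t₀ + (2*u-1)*x.2)).comp (Mmap n u)) x := fun u x =>
    ((hD.differentiable (by norm_num) _).hasFDerivAt).comp x (hinner u x)
  have main : ∀ p : EuclideanSpace ℝ (Fin n) × ℝ,
      HasFDerivAt (fun q : EuclideanSpace ℝ (Fin n) × ℝ =>
        ∫ u in (0:ℝ)..1, D (q.1, t₀ + (2*u - 1) * q.2))
      (∫ u in (0:ℝ)..1, (fderiv ℝ D (p.1, t₀ + (2*u-1)*p.2)).comp (Mmap n u)) p := by
    intro p
    obtain ⟨C, hC⟩ := ((isCompact_closedBall p 1).prod (isCompact_uIcc (a := (0:ℝ)) (b := 1)))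
      |>.exists_bound_of_continuousOn hF'c.continuousOn
    apply intervalIntegral.hasFDerivAt_integral_of_dominated_of_fderiv_le
      (F' := fun x u => (fderiv ℝ D (x.1, t₀ + (2*u-1)*x.2)).comp (Mmap n u))
      (bound := fun _ => C) (s := ball p 1) (ball_mem_nhds p one_pos)
    · filter_upwards with x
      exact (hD.continuous.comp (show Continuous fun u : ℝ =>
        ((x.1, t₀ + (2*u-1)*x.2) : EuclideanSpace ℝ (Fin n) × ℝ) by fun_prop)).aestronglyMeasurable
    · exact (hD.continuous.comp (show Continuous fun u : ℝ =>
        ((p.1, t₀ + (2*u-1)*p.2) : EuclideanSpace ℝ (Fin n) × ℝ) by fun_prop)).intervalIntegrable _ _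
    · exact (hF'c.comp (Continuous.prodMk_right p)).aestronglyMeasurable
    · filter_upwards with u hu
      intro x hx
      exact hC ((x, u)) ⟨ball_subset_closedBall hx, uIoc_subset_uIcc hu⟩
    · exact intervalIntegrable_const
    · filter_upwards with u _ x _
      exact hdiffF u x
  rw [contDiff_one_iff_fderiv]
  refine ⟨fun p => (main p).differentiableAt, ?_⟩
  have heq : (fderiv ℝ fun q : EuclideanSpace ℝ (Fin n) × ℝ =>
      ∫ u in (0:ℝ)..1, D (q.1, t₀ + (2*u - 1) * q.2))
      = fun p => ∫ u in (0:ℝ)..1, (fderiv ℝ D (p.1, t₀ + (2*u-1)*p.2)).comp (Mmap n u) :=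
    funext fun p => (main p).fderiv
  rw [heq]
  refine intervalIntegral.continuous_parametric_intervalIntegral_of_continuous'
    (f := fun (p : EuclideanSpace ℝ (Fin n) × ℝ) (u : ℝ) => (fderiv ℝ D (p.1, t₀ + (2*u-1)*p.2)).comp (Mmap n u)) ?_ 0 1
  exact hF'c

/-- **Implicit-function-theorem step: a continuous family of symmetric loops.**
If `Φ : ℝⁿ × ℝ → ℝⁿ` is `C²`, `∂Φ/∂t (x₀, t₀) = 0`, and the mixed partial
derivative `∂²Φ/∂x∂t (x₀, t₀)` is non-singular, then there are `η > 0` and a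
map `z` continuous on `(-η, η)` with `z 0 = x₀` such that
`Φ (z δ, t₀ + δ) = Φ (z δ, t₀ - δ)` for every `δ ∈ (-η, η)`. -/
theorem continuous_family_of_loops
    (n : ℕ) (Φ : EuclideanSpace ℝ (Fin n) × ℝ → EuclideanSpace ℝ (Fin n))
    (hΦ : ContDiff ℝ 2 Φ)
    (x₀ : EuclideanSpace ℝ (Fin n)) (t₀ : ℝ)
    (hstat : deriv (fun s => Φ (x₀, s)) t₀ = 0)
    (hns : Function.Bijective
      ⇑(fderiv ℝ (fun x => deriv (fun s => Φ (x, s)) t₀) x₀)) :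
    ∃ η > 0, ∃ z : ℝ → EuclideanSpace ℝ (Fin n),
      ContinuousOn z (Set.Ioo (-η) η) ∧ z 0 = x₀ ∧
      ∀ δ ∈ Set.Ioo (-η) η, Φ (z δ, t₀ + δ) = Φ (z δ, t₀ - δ) := by
  classical
  set D : EuclideanSpace ℝ (Fin n) × ℝ → EuclideanSpace ℝ (Fin n) :=
    fun p => fderiv ℝ Φ p ((0 : EuclideanSpace ℝ (Fin n)), (1:ℝ)) with hDdef
  have hD : ContDiff ℝ 1 D := (hΦ.fderiv_right (by norm_num)).clm_apply contDiff_const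
  have key : ∀ x t, HasDerivAt (fun s => Φ (x, s)) (D (x,t)) t := by
    intro x t
    have h1 : HasDerivAt (fun s : ℝ => ((x, s) : EuclideanSpace ℝ (Fin n) × ℝ))
        ((0 : EuclideanSpace ℝ (Fin n)), (1:ℝ)) t :=
      (hasDerivAt_const t x).prodMk (hasDerivAt_id t)
    exact ((hΦ.differentiable (by norm_num) (x,t)).hasFDerivAt).comp_hasDerivAt t h1
  have hder : ∀ x t, deriv (fun s => Φ (x, s)) t = D (x, t) := fun x t => (key x t).deriv
  have hstat' : D (x₀, t₀) = 0 := by rw [← hder]; exact hstat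
  have hfun : (fun x => deriv (fun s => Φ (x, s)) t₀) = fun x => D (x, t₀) :=
    funext fun x => hder x t₀
  rw [hfun] at hns
  set G : EuclideanSpace ℝ (Fin n) × ℝ → EuclideanSpace ℝ (Fin n) :=
    fun p => ∫ u in (0:ℝ)..1, D (p.1, t₀ + (2*u - 1) * p.2) with hGdef
  have hG : ContDiff ℝ 1 G := G_contDiff n D hD t₀
  -- the FTC identity
  have ident : ∀ x δ, (2*δ) • G (x, δ) = Φ (x, t₀ + δ) - Φ (x, t₀ - δ) := by
    intro x δ
    have hcv : ∫ u in (0:ℝ)..1, (2*δ) • D (x, t₀ + (2*u - 1) * δ)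
        = ∫ s in (t₀ + (2*(0:ℝ)-1)*δ)..(t₀ + (2*(1:ℝ)-1)*δ), D (x, s) := by
      apply intervalIntegral.integral_comp_smul_deriv (f := fun u => t₀ + (2*u-1)*δ)
        (f' := fun _ => 2*δ) (g := fun s => D (x, s))
      · intro u _
        simpa using (((hasDerivAt_id u).const_mul 2).sub_const 1 |>.mul_const δ).const_add t₀
      · exact continuousOn_const
      · exact hD.continuous.comp (by fun_prop)
    have hftc : ∫ s in (t₀ - δ)..(t₀ + δ), D (x, s) = Φ (x, t₀ + δ) - Φ (x, t₀ - δ) := by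
      apply intervalIntegral.integral_eq_sub_of_hasDerivAt (fun s _ => key x s)
      exact (hD.continuous.comp (by fun_prop)).intervalIntegrable _ _
    have : (2*δ) • G (x, δ) = ∫ u in (0:ℝ)..1, (2*δ) • D (x, t₀ + (2*u - 1) * δ) :=
      (intervalIntegral.integral_smul _ _).symm
    rw [this, hcv]
    norm_num
    rw [show t₀ + -δ = t₀ - δ by ring, hftc]
  have hG0 : ∀ x, G (x, 0) = D (x, t₀) := by
    intro x
    show (∫ u in (0:ℝ)..1, D (x, t₀ + (2*u - 1) * 0)) = D (x, t₀)
    simp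
  have hGdiff : Differentiable ℝ G := hG.differentiable (by norm_num)
  set B : (EuclideanSpace ℝ (Fin n) × ℝ) →L[ℝ] EuclideanSpace ℝ (Fin n) :=
    fderiv ℝ G (x₀, 0) with hBdef
  -- relation between B and the mixed derivative
  have hBinl : fderiv ℝ (fun x => D (x, t₀)) x₀
      = B.comp (ContinuousLinearMap.inl ℝ (EuclideanSpace ℝ (Fin n)) ℝ) := by
    have h1 : HasFDerivAt (fun x : EuclideanSpace ℝ (Fin n) => G (x, 0))
        (B.comp (ContinuousLinearMap.inl ℝ (EuclideanSpace ℝ (Fin n)) ℝ)) x₀ :=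
      (hGdiff _).hasFDerivAt.comp x₀
        ((ContinuousLinearMap.inl ℝ (EuclideanSpace ℝ (Fin n)) ℝ).hasFDerivAt)
    have h2 : (fun x : EuclideanSpace ℝ (Fin n) => G (x, 0)) = fun x => D (x, t₀) :=
      funext hG0
    rw [← h2]
    exact h1.fderiv
  -- the auxiliary map Ψ and its derivative
  set Ψ : EuclideanSpace ℝ (Fin n) × ℝ → EuclideanSpace ℝ (Fin n) × ℝ :=
    fun p => (G p, p.2) with hΨdef
  set Ψ' : (EuclideanSpace ℝ (Fin n) × ℝ) →L[ℝ] (EuclideanSpace ℝ (Fin n) × ℝ) :=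
    B.prod (ContinuousLinearMap.snd ℝ (EuclideanSpace ℝ (Fin n)) ℝ) with hΨ'def
  have hΨderiv : HasFDerivAt Ψ Ψ' (x₀, 0) := (hGdiff _).hasFDerivAt.prodMk (hasFDerivAt_snd)
  have hΨstrict : HasStrictFDerivAt Ψ Ψ' (x₀, 0) := by
    have h := ((hG.prodMk contDiff_snd).contDiffAt (x := (x₀, 0))).hasStrictFDerivAt (by norm_num)
    rwa [hΨderiv.fderiv] at h
  -- bijectivity of Ψ'
  have hinj : Function.Injective ⇑Ψ' := by
    intro a b hab
    have hz : Ψ' (a - b) = 0 := by rw [map_sub, hab, sub_self]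
    have h2 : (a - b).2 = 0 := congrArg Prod.snd hz
    have h1 : B (a - b) = 0 := congrArg Prod.fst hz
    have hab1 : (a - b) = ((a-b).1, (0:ℝ)) := by rw [← h2]
    have : B ((a-b).1, (0:ℝ)) = 0 := by rw [← hab1]; exact h1
    have hA : (fderiv ℝ (fun x => D (x, t₀)) x₀) (a-b).1 = 0 := by
      rw [hBinl]; exact this
    have h10 : (a - b).1 = 0 := by
      apply hns.injective
      rw [hA, map_zero]
    have : a - b = 0 := by
      rw [hab1, h10]; rfl
    exact sub_eq_zero.mp this
  have hbij : Function.Bijective ⇑Ψ' := by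
    refine ⟨hinj, ?_⟩
    exact (LinearMap.injective_iff_surjective
      (f := ((Ψ' : (EuclideanSpace ℝ (Fin n) × ℝ) →L[ℝ] (EuclideanSpace ℝ (Fin n) × ℝ)) :
        (EuclideanSpace ℝ (Fin n) × ℝ) →ₗ[ℝ] (EuclideanSpace ℝ (Fin n) × ℝ)))).mp hinj
  set Ψe : (EuclideanSpace ℝ (Fin n) × ℝ) ≃L[ℝ] (EuclideanSpace ℝ (Fin n) × ℝ) :=
    (LinearEquiv.ofBijective (Ψ' : (EuclideanSpace ℝ (Fin n) × ℝ) →ₗ[ℝ] (EuclideanSpace ℝ (Fin n) × ℝ)) hbij).toContinuousLinearEquiv with hΨedef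
  have hcoe : (Ψe : (EuclideanSpace ℝ (Fin n) × ℝ) →L[ℝ] (EuclideanSpace ℝ (Fin n) × ℝ)) = Ψ' :=
    ContinuousLinearMap.ext fun p => rfl
  have hΨe : HasStrictFDerivAt Ψ (Ψe : (EuclideanSpace ℝ (Fin n) × ℝ) →L[ℝ] (EuclideanSpace ℝ (Fin n) × ℝ)) (x₀, 0) := by
    rw [hcoe]; exact hΨstrict
  -- local inverse
  set PH := hΨe.toOpenPartialHomeomorph Ψ with hPHdef
  have hsource : (x₀, (0:ℝ)) ∈ PH.source := hΨe.mem_toOpenPartialHomeomorph_source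
  have hPHcoe : ⇑PH = Ψ := hΨe.toOpenPartialHomeomorph_coe
  have hΨ00 : Ψ (x₀, 0) = ((0 : EuclideanSpace ℝ (Fin n)), (0:ℝ)) := by
    show (G (x₀, 0), (0:ℝ)) = _
    rw [hG0, hstat']
  have htarget : ((0 : EuclideanSpace ℝ (Fin n)), (0:ℝ)) ∈ PH.target := by
    have := PH.map_source hsource
    rwa [hPHcoe, hΨ00] at this
  -- choose η
  have hjcont : Continuous (fun δ : ℝ => ((0 : EuclideanSpace ℝ (Fin n)), δ)) := by fun_prop
  have hopen : IsOpen ((fun δ : ℝ => ((0 : EuclideanSpace ℝ (Fin n)), δ)) ⁻¹' PH.target) :=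
    PH.open_target.preimage hjcont
  have h0mem : (0:ℝ) ∈ (fun δ : ℝ => ((0 : EuclideanSpace ℝ (Fin n)), δ)) ⁻¹' PH.target :=
    htarget
  obtain ⟨η, ηpos, hball⟩ := Metric.isOpen_iff.mp hopen 0 h0mem
  have hη : ∀ δ ∈ Set.Ioo (-η) η, ((0 : EuclideanSpace ℝ (Fin n)), δ) ∈ PH.target := by
    intro δ hδ
    apply hball
    rw [Real.ball_eq_Ioo]
    simpa using hδ
  refine ⟨η, ηpos, fun δ => (PH.symm ((0 : EuclideanSpace ℝ (Fin n)), δ)).1, ?_, ?_, ?_⟩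
  · have h := PH.continuousOn_symm.comp (hjcont.continuousOn) (fun δ hδ => hη δ hδ)
    exact h.fst
  · show (PH.symm ((0 : EuclideanSpace ℝ (Fin n)), (0:ℝ))).1 = x₀
    have h00 : ((0 : EuclideanSpace ℝ (Fin n)), (0:ℝ)) = PH (x₀, 0) := by
      rw [hPHcoe, hΨ00]
    rw [h00, PH.left_inv hsource]
  · intro δ hδ
    have ht := hη δ hδ
    set q := PH.symm ((0 : EuclideanSpace ℝ (Fin n)), δ) with hq
    have hΨq : Ψ q = ((0 : EuclideanSpace ℝ (Fin n)), δ) := by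
      have := PH.right_inv ht
      rwa [hPHcoe] at this
    have hq2 : q.2 = δ := congrArg Prod.snd hΨq
    have hGq : G q = 0 := congrArg Prod.fst hΨq
    have hGq1 : G (q.1, δ) = 0 := by
      rw [show ((q.1, δ) : EuclideanSpace ℝ (Fin n) × ℝ) = q by rw [← hq2]]
      exact hGq
    have := ident q.1 δ
    rw [hGq1, smul_zero] at this
    show Φ (q.1, t₀ + δ) = Φ (q.1, t₀ - δ)
    exact sub_eq_zero.mp this.symm
end

section
/- Let Φ : ℝⁿ × ℝ → ℝⁿ be a C² map and let t₀ ∈ ℝ. Define G : ℝⁿ × ℝ → ℝⁿ by G(x, δ) = (1/(2δ))·(Φ(x, t₀ + δ) − Φ(x, t₀ − δ)) for δ ≠ 0, and G(x, 0) = ∂Φ/∂t(x, t₀). Then G is continuously differentiable (C¹) on ℝⁿ × ℝ, and for every x₀ ∈ ℝⁿ the partial derivative of G in x at (x₀, 0) equals the mixed partial derivative ∂²Φ/∂x∂t(x₀, t₀) (the derivative in x at x₀ of the map x ↦ ∂Φ/∂t(x, t₀)). -/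
open MeasureTheory intervalIntegral Metric Set

/-- C¹ of a parametric interval integral of a C¹ integrand. -/
lemma aux_contDiff_param {E F : Type*} [NormedAddCommGroup E] [NormedSpace ℝ E]
    [FiniteDimensional ℝ E] [NormedAddCommGroup F] [NormedSpace ℝ F] [FiniteDimensional ℝ F]
    [CompleteSpace F]
    (g : E × ℝ → F) (hg : ContDiff ℝ 1 g) (a b : ℝ) :
    ContDiff ℝ 1 (fun x => ∫ s in a..b, g (x, s)) := by
  set gd : E × ℝ → (E →L[ℝ] F) := fun p => (fderiv ℝ g p).comp (ContinuousLinearMap.inl ℝ E ℝ)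
    with hgd
  have hgdc : Continuous gd :=
    (hg.continuous_fderiv one_ne_zero).clm_comp continuous_const
  have hdiff : ∀ (x : E) (t : ℝ), HasFDerivAt (fun y => g (y, t)) (gd (x, t)) x := by
    intro x t
    exact ((hg.differentiable one_ne_zero (x, t)).hasFDerivAt).comp x (hasFDerivAt_prodMk_left x t)
  have key : ∀ x₀ : E, HasFDerivAt (fun x => ∫ s in a..b, g (x, s))
      (∫ s in a..b, gd (x₀, s)) x₀ := by
    intro x₀
    obtain ⟨C, hC⟩ : ∃ C, ∀ p ∈ (closedBall x₀ 1) ×ˢ (uIcc a b), ‖gd p‖ ≤ C :=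
      ((isCompact_closedBall x₀ 1).prod isCompact_uIcc).exists_bound_of_continuousOn
        hgdc.continuousOn
    apply intervalIntegral.hasFDerivAt_integral_of_dominated_of_fderiv_le
      (F' := fun x t => gd (x, t)) (bound := fun _ => C) (ball_mem_nhds x₀ one_pos)
    · filter_upwards with x
      exact (hg.continuous.comp (Continuous.prodMk_right x)).aestronglyMeasurable
    · exact (hg.continuous.comp (Continuous.prodMk_right x₀)).intervalIntegrable a b
    · exact (hgdc.comp (Continuous.prodMk_right x₀)).aestronglyMeasurable
    · filter_upwards with t ht x hx
      exact hC (x, t) ⟨ball_subset_closedBall hx, uIoc_subset_uIcc ht⟩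
    · exact intervalIntegrable_const
    · filter_upwards with t ht x _
      exact hdiff x t
  rw [contDiff_one_iff_fderiv]
  constructor
  · exact fun x => (key x).differentiableAt
  · have : (fderiv ℝ fun x => ∫ s in a..b, g (x, s)) = fun x₀ => ∫ s in a..b, gd (x₀, s) := by
      funext x₀; exact (key x₀).fderiv
    rw [this]
    exact intervalIntegral.continuous_parametric_intervalIntegral_of_continuous'
      (f := fun x t => gd (x, t)) hgdc a b

/-- **The symmetric difference quotient is `C¹`.**
For `Φ : ℝⁿ × ℝ → ℝⁿ` of class `C²` and `G (x, δ) = (Φ (x, t₀+δ) - Φ (x, t₀-δ))/(2δ)`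
for `δ ≠ 0`, `G (x, 0) = ∂Φ/∂t (x, t₀)`, the map `G` is `C¹`, and its partial
derivative in `x` at `(x₀, 0)` equals the mixed partial `∂²Φ/∂x∂t (x₀, t₀)`. -/
theorem symmetric_difference_quotient_contDiff
    (n : ℕ) (Φ : EuclideanSpace ℝ (Fin n) × ℝ → EuclideanSpace ℝ (Fin n))
    (hΦ : ContDiff ℝ 2 Φ) (t₀ : ℝ)
    (G : EuclideanSpace ℝ (Fin n) × ℝ → EuclideanSpace ℝ (Fin n))
    (hG0 : ∀ x, G (x, 0) = deriv (fun s => Φ (x, s)) t₀)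
    (hGδ : ∀ x (δ : ℝ), δ ≠ 0 →
      G (x, δ) = (1 / (2 * δ)) • (Φ (x, t₀ + δ) - Φ (x, t₀ - δ))) :
    ContDiff ℝ 1 G ∧
    ∀ x₀, fderiv ℝ (fun x => G (x, 0)) x₀
        = fderiv ℝ (fun x => deriv (fun s => Φ (x, s)) t₀) x₀ := by
  have hΦ1 : ContDiff ℝ 1 Φ := hΦ.of_le (by norm_num)
  -- ψ is the time partial derivative of Φ
  set ψ : EuclideanSpace ℝ (Fin n) × ℝ → EuclideanSpace ℝ (Fin n) :=
    fun p => fderiv ℝ Φ p (0, 1) with hψ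
  have hψ1 : ContDiff ℝ 1 ψ :=
    (hΦ.fderiv_right (m := 1) (by norm_num)).clm_apply contDiff_const
  -- the derivative of s ↦ Φ (x, t₀ + s*δ)
  have hder : ∀ (x : EuclideanSpace ℝ (Fin n)) (δ s : ℝ),
      HasDerivAt (fun s => Φ (x, t₀ + s * δ)) (δ • ψ (x, t₀ + s * δ)) s := by
    intro x δ s
    have h1 : HasDerivAt (fun s : ℝ => ((x, t₀ + s * δ) : EuclideanSpace ℝ (Fin n) × ℝ))
        ((0 : EuclideanSpace ℝ (Fin n)), δ) s := by
      apply (hasDerivAt_const s x).prodMk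
      simpa [mul_comm] using ((hasDerivAt_id s).const_mul δ).const_add t₀
    have h2 := ((hΦ1.differentiable one_ne_zero (x, t₀ + s * δ)).hasFDerivAt).comp_hasDerivAt s h1
    have h3 : fderiv ℝ Φ (x, t₀ + s * δ) (0, δ) = δ • ψ (x, t₀ + s * δ) := by
      have he : ((0 : EuclideanSpace ℝ (Fin n)), δ)
          = δ • ((0 : EuclideanSpace ℝ (Fin n)), (1:ℝ)) := by
        simp [Prod.smul_mk]
      rw [hψ, he, (fderiv ℝ Φ (x, t₀ + s * δ)).map_smul]
    rwa [h3] at h2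
  have hder0 : ∀ x, deriv (fun s => Φ (x, s)) t₀ = ψ (x, t₀) := by
    intro x
    have h1 : HasDerivAt (fun s : ℝ => ((x, s) : EuclideanSpace ℝ (Fin n) × ℝ))
        ((0 : EuclideanSpace ℝ (Fin n)), 1) t₀ :=
      (hasDerivAt_const t₀ x).prodMk (hasDerivAt_id t₀)
    exact (((hΦ1.differentiable one_ne_zero (x, t₀)).hasFDerivAt).comp_hasDerivAt t₀ h1).deriv
  -- integral representation of G
  have hrep : G = fun p => (2⁻¹ : ℝ) • ∫ s in (-1:ℝ)..1, ψ (p.1, t₀ + s * p.2) := by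
    funext p
    obtain ⟨x, δ⟩ := p
    rcases eq_or_ne δ 0 with rfl | hδ
    · simp only [hG0 x, hder0 x, mul_zero, intervalIntegral.integral_const]
      rw [smul_smul]
      norm_num [hψ]
    · have hcont : Continuous fun s : ℝ => ψ (x, t₀ + s * δ) :=
        hψ1.continuous.comp (by fun_prop)
      have hFTC : ∫ s in (-1:ℝ)..1, δ • ψ (x, t₀ + s * δ)
          = Φ (x, t₀ + 1 * δ) - Φ (x, t₀ + (-1) * δ) :=
        intervalIntegral.integral_eq_sub_of_hasDerivAt (fun s _ => hder x δ s)
          ((hcont.const_smul δ).intervalIntegrable _ _)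
      rw [intervalIntegral.integral_smul] at hFTC
      have hint : ∫ s in (-1:ℝ)..1, ψ (x, t₀ + s * δ)
          = δ⁻¹ • (Φ (x, t₀ + δ) - Φ (x, t₀ - δ)) := by
        rw [eq_inv_smul_iff₀ hδ, hFTC]; norm_num [sub_eq_add_neg]
      rw [hGδ x δ hδ, hint, smul_smul]
      congr 1
      field_simp
  constructor
  · rw [hrep]
    apply ContDiff.const_smul
    exact aux_contDiff_param
      (fun q : (EuclideanSpace ℝ (Fin n) × ℝ) × ℝ => ψ (q.1.1, t₀ + q.2 * q.1.2))
      (hψ1.comp (by fun_prop)) (-1) 1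
  · intro x₀
    congr 1
    funext x
    exact hG0 x
end

section
/- Let f₁, f₂ : ℝⁿ → ℝⁿ be C² vector fields (the paper states C¹, but C² is used so that the induced action is C²). Let x₀ ∈ ℝⁿ be a stasis point witnessed by constants k₁, k₂ > 0 with k₁·f₁(x₀) + k₂·f₂(x₀) = 0, and suppose the total derivative of the map x ↦ k₁·f₁(x) + k₂·f₂(x) at x₀ is a non-singular linear map ℝⁿ → ℝⁿ. Then for every ε > 0 there exists a two-cycle for the inclusion x′ ∈ {f₁(x), f₂(x)} contained in the ε-ball around x₀: there exist real numbers 0 < κ < δ and a continuous function x : ℝ → ℝⁿ with x(t) = x(t + δ) for all t, such that x′(t) = f₁(x(t)) for t ∈ (0, κ), x′(t) = f₂(x(t)) for t ∈ (κ, δ) (with matching one-sided derivatives at the switching times), and ‖x(t) − x₀‖ < ε for all t. -/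
open Set Metric Real Filter
open scoped NNReal Topology

namespace TwoCycleAux

variable {E : Type*} [NormedAddCommGroup E] [NormedSpace ℝ E]

/-- `exp x ≤ 1 + 2x` for `0 ≤ x ≤ 1/2`. -/
lemma exp_le_one_add_two_mul {x : ℝ} (h0 : 0 ≤ x) (h2 : x ≤ 1 / 2) :
    Real.exp x ≤ 1 + 2 * x := by
  have h1 : x < 1 := by linarith
  have hb := Real.exp_bound_div_one_sub_of_interval h0 h1
  have h3 : (1 : ℝ) / (1 - x) ≤ 1 + 2 * x := by
    rw [div_le_iff₀ (by linarith)]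
    nlinarith
  linarith

/-- Mean value inequality wrapper: if `f 0 = 0` and `‖f'‖ ≤ C` on `[0,T]` then `‖f t‖ ≤ C t`. -/
lemma norm_le_mul_of_deriv {f w : ℝ → E} {T C : ℝ}
    (hf : ∀ t ∈ Icc (0:ℝ) T, HasDerivWithinAt f (w t) (Icc (0:ℝ) T) t)
    (h0 : f 0 = 0) (hC : ∀ t ∈ Icc (0:ℝ) T, ‖w t‖ ≤ C) :
    ∀ t ∈ Icc (0:ℝ) T, ‖f t‖ ≤ C * t := by
  intro t ht
  have := norm_image_sub_le_of_norm_deriv_le_segment' hf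
    (fun s hs => hC s (Ico_subset_Icc_self hs)) t ht
  simpa [h0] using this

lemma hasDerivWithinAt_Ici_of_Icc {f : ℝ → E} {g : E} {T t : ℝ} (ht : t ∈ Ico (0:ℝ) T)
    (h : HasDerivWithinAt f g (Icc (0:ℝ) T) t) : HasDerivWithinAt f g (Ici t) t :=
  (h.mono (Icc_subset_Icc ht.1 le_rfl)).mono_of_mem_nhdsWithin
    (Icc_mem_nhdsGE_of_mem ⟨le_rfl, ht.2⟩)

/-- Global-in-space Picard–Lindelöf for a bounded globally Lipschitz field. -/
lemma exists_sol [CompleteSpace E] {F : E → E} {K : ℝ≥0} {M : ℝ}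
    (hlip : LipschitzWith K F) (hM : ∀ x, ‖F x‖ ≤ M) {T : ℝ} (hT : 0 < T) (p : E) :
    ∃ sol : ℝ → E, sol 0 = p ∧
      ∀ t ∈ Icc (0:ℝ) T, HasDerivWithinAt sol (F (sol t)) (Icc (0:ℝ) T) t := by
  have hM0 : 0 ≤ M := (norm_nonneg _).trans (hM p)
  have hpl : IsPicardLindelof (fun _ x => F x) (tmin := 0) (tmax := T)
      ⟨0, left_mem_Icc.2 hT.le⟩ p ⟨M * T, by positivity⟩ 0 ⟨M, hM0⟩ K :=
    { lipschitzOnWith := fun _ _ => hlip.lipschitzOnWith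
      continuousOn := fun _ _ => continuousOn_const
      norm_le := fun _ _ x _ => hM x
      mul_max_le := by
        simp only [NNReal.coe_mk, NNReal.coe_zero, sub_zero, sub_self]
        rw [max_eq_left hT.le]
        exact le_rfl }
  exact hpl.exists_eq_forall_mem_Icc_hasDerivWithinAt₀

/-- Second-order "difference of differences" bound for a field with Lipschitz derivative. -/
lemma norm_dd_le {F : E → E} {K K₂ : ℝ≥0}
    (hdF : Differentiable ℝ F) (hK : ∀ x, ‖fderiv ℝ F x‖ ≤ K)
    (hK₂ : LipschitzWith K₂ (fderiv ℝ F)) (a b c d : E) :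
    ‖F a - F b - (F c - F d)‖ ≤
      K * ‖a - c - (b - d)‖ + K₂ * (‖c - d‖ + ‖a - c - (b - d)‖) * ‖b - d‖ := by
  set C : ℝ := ↑K * ‖a - c - (b - d)‖ + ↑K₂ * (‖c - d‖ + ‖a - c - (b - d)‖) * ‖b - d‖ with hCdef
  set G : ℝ → E := fun s => F (c + s • (a - c)) - F (d + s • (b - d)) with hGdef
  have hG' : ∀ s ∈ Icc (0:ℝ) 1, HasDerivWithinAt G
      (fderiv ℝ F (c + s • (a - c)) (a - c) - fderiv ℝ F (d + s • (b - d)) (b - d))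
      (Icc (0:ℝ) 1) s := by
    intro s _
    have h₁ : HasDerivAt (fun s : ℝ => c + s • (a - c)) (a - c) s := by
      simpa using ((hasDerivAt_id s).smul_const (a - c)).const_add c
    have h₂ : HasDerivAt (fun s : ℝ => d + s • (b - d)) (b - d) s := by
      simpa using ((hasDerivAt_id s).smul_const (b - d)).const_add d
    exact (((hdF _).hasFDerivAt.comp_hasDerivAt s h₁).sub
      ((hdF _).hasFDerivAt.comp_hasDerivAt s h₂)).hasDerivWithinAt
  have bound : ∀ s ∈ Ico (0:ℝ) 1,
      ‖fderiv ℝ F (c + s • (a - c)) (a - c) - fderiv ℝ F (d + s • (b - d)) (b - d)‖ ≤ C := by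
    intro s hs
    set γ := c + s • (a - c)
    set η := d + s • (b - d)
    have key : fderiv ℝ F γ (a - c) - fderiv ℝ F η (b - d)
        = fderiv ℝ F γ (a - c - (b - d)) + (fderiv ℝ F γ - fderiv ℝ F η) (b - d) := by
      simp [map_sub, ContinuousLinearMap.sub_apply]
      abel
    rw [key]
    have h1 : ‖fderiv ℝ F γ (a - c - (b - d))‖ ≤ ↑K * ‖a - c - (b - d)‖ :=
      le_trans ((fderiv ℝ F γ).le_opNorm _)
        (mul_le_mul_of_nonneg_right (hK γ) (norm_nonneg _))
    have h2 : ‖(fderiv ℝ F γ - fderiv ℝ F η) (b - d)‖ ≤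
        (↑K₂ * (‖c - d‖ + ‖a - c - (b - d)‖)) * ‖b - d‖ := by
      refine le_trans ((fderiv ℝ F γ - fderiv ℝ F η).le_opNorm _) ?_
      refine mul_le_mul_of_nonneg_right ?_ (norm_nonneg _)
      have hlipd : ‖fderiv ℝ F γ - fderiv ℝ F η‖ ≤ ↑K₂ * ‖γ - η‖ := by
        have := hK₂.dist_le_mul γ η
        simpa [dist_eq_norm] using this
      refine hlipd.trans ?_
      have hγη : ‖γ - η‖ ≤ ‖c - d‖ + ‖a - c - (b - d)‖ := by
        have hexp : γ - η = (c - d) + s • (a - c - (b - d)) := by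
          simp only [γ, η, smul_sub]
          abel
        rw [hexp]
        refine (norm_add_le _ _).trans ?_
        gcongr
        rw [norm_smul, Real.norm_eq_abs, abs_of_nonneg hs.1]
        nlinarith [norm_nonneg (a - c - (b - d)), hs.2.le, hs.1]
      exact mul_le_mul_of_nonneg_left hγη (NNReal.coe_nonneg K₂)
    calc ‖fderiv ℝ F γ (a - c - (b - d)) + (fderiv ℝ F γ - fderiv ℝ F η) (b - d)‖
        ≤ ‖fderiv ℝ F γ (a - c - (b - d))‖ + ‖(fderiv ℝ F γ - fderiv ℝ F η) (b - d)‖ :=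
          norm_add_le _ _
      _ ≤ C := by rw [hCdef]; linarith
  have hmv := norm_image_sub_le_of_norm_deriv_le_segment' hG' bound 1 (right_mem_Icc.2 zero_le_one)
  have hG1 : G 1 = F a - F b := by simp [hGdef]
  have hG0 : G 0 = F c - F d := by simp [hGdef]
  calc ‖F a - F b - (F c - F d)‖ = ‖G 1 - G 0‖ := by rw [hG1, hG0]
    _ ≤ C * (1 - 0) := hmv
    _ = C := by ring


section Flow

variable {F : E → E} {K K₂ : ℝ≥0} {M T : ℝ} {sol solq : ℝ → E} {p q : E}

lemma est_a (hM : ∀ x, ‖F x‖ ≤ M) (hsol0 : sol 0 = p)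
    (hsold : ∀ t ∈ Icc (0:ℝ) T, HasDerivWithinAt sol (F (sol t)) (Icc (0:ℝ) T) t) :
    ∀ t ∈ Icc (0:ℝ) T, ‖sol t - p‖ ≤ M * t :=
  norm_le_mul_of_deriv (w := fun t => F (sol t))
    (fun t ht => (hsold t ht).sub_const p) (by simp [hsol0]) (fun t _ => hM _)

lemma est_b (hM : ∀ x, ‖F x‖ ≤ M) (hlip : LipschitzWith K F) (hsol0 : sol 0 = p)
    (hsold : ∀ t ∈ Icc (0:ℝ) T, HasDerivWithinAt sol (F (sol t)) (Icc (0:ℝ) T) t) :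
    ∀ t ∈ Icc (0:ℝ) T, ‖sol t - p - t • F p‖ ≤ ((K:ℝ) * M * T) * t := by
  have hM0 : 0 ≤ M := (norm_nonneg _).trans (hM p)
  refine norm_le_mul_of_deriv (w := fun t => F (sol t) - F p) ?_ (by simp [hsol0]) ?_
  · intro t ht
    have h2 : HasDerivWithinAt (fun t : ℝ => t • F p) ((1:ℝ) • F p) (Icc (0:ℝ) T) t :=
      ((hasDerivAt_id t).smul_const (F p)).hasDerivWithinAt
    simpa [Pi.sub_def] using ((hsold t ht).sub_const p).sub h2
  · intro t ht
    have h1 : ‖F (sol t) - F p‖ ≤ (K:ℝ) * ‖sol t - p‖ := by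
      have := hlip.dist_le_mul (sol t) p
      simpa [dist_eq_norm] using this
    have h2 := est_a hM hsol0 hsold t ht
    calc ‖F (sol t) - F p‖ ≤ (K:ℝ) * ‖sol t - p‖ := h1
      _ ≤ (K:ℝ) * (M * t) := by gcongr
      _ = ((K:ℝ) * M) * t := by ring
      _ ≤ ((K:ℝ) * M) * T := mul_le_mul_of_nonneg_left ht.2 (by positivity)
      _ = (K:ℝ) * M * T := by ring

lemma est_c (hlip : LipschitzWith K F) (hsmall : (K:ℝ) * T ≤ 1/2)
    (hsol0 : sol 0 = p)
    (hsold : ∀ t ∈ Icc (0:ℝ) T, HasDerivWithinAt sol (F (sol t)) (Icc (0:ℝ) T) t)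
    (hsolq0 : solq 0 = q)
    (hsolqd : ∀ t ∈ Icc (0:ℝ) T, HasDerivWithinAt solq (F (solq t)) (Icc (0:ℝ) T) t) :
    ∀ t ∈ Icc (0:ℝ) T, ‖sol t - solq t‖ ≤ 2 * ‖p - q‖ := by
  intro t ht
  have hgr := dist_le_of_trajectories_ODE (v := fun _ x => F x) (fun _ => hlip)
    (fun s hs => (hsold s hs).continuousWithinAt)
    (fun s hs => hasDerivWithinAt_Ici_of_Icc hs (hsold s (Ico_subset_Icc_self hs)))
    (fun s hs => (hsolqd s hs).continuousWithinAt)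
    (fun s hs => hasDerivWithinAt_Ici_of_Icc hs (hsolqd s (Ico_subset_Icc_self hs)))
    (le_of_eq (by rw [hsol0, hsolq0])) t ht
  have hKt : (K:ℝ) * t ≤ 1/2 := by
    refine le_trans ?_ hsmall
    exact mul_le_mul_of_nonneg_left ht.2 (NNReal.coe_nonneg K)
  have hexp : Real.exp ((K:ℝ) * (t - 0)) ≤ 2 := by
    rw [sub_zero]
    have := exp_le_one_add_two_mul (mul_nonneg (NNReal.coe_nonneg K) ht.1) hKt
    linarith
  rw [dist_eq_norm, dist_eq_norm] at hgr
  calc ‖sol t - solq t‖ ≤ ‖p - q‖ * Real.exp ((K:ℝ) * (t - 0)) := hgr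
    _ ≤ ‖p - q‖ * 2 := by gcongr
    _ = 2 * ‖p - q‖ := by ring

lemma est_d (hlip : LipschitzWith K F) (hK1 : 1 ≤ K) (hsmall : (K:ℝ) * T ≤ 1/2)
    (hsol0 : sol 0 = p)
    (hsold : ∀ t ∈ Icc (0:ℝ) T, HasDerivWithinAt sol (F (sol t)) (Icc (0:ℝ) T) t)
    (hsolq0 : solq 0 = q)
    (hsolqd : ∀ t ∈ Icc (0:ℝ) T, HasDerivWithinAt solq (F (solq t)) (Icc (0:ℝ) T) t) :
    ∀ t ∈ Icc (0:ℝ) T, ‖sol t - solq t - (p - q)‖ ≤ 2 * (K:ℝ) * T * ‖p - q‖ := by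
  intro t ht
  have hKpos : (0:ℝ) < (K:ℝ) := by exact_mod_cast lt_of_lt_of_le zero_lt_one hK1
  have hg0 : solq 0 + (p - q) = p := by rw [hsolq0]; abel
  have hgr := dist_le_of_approx_trajectories_ODE (v := fun _ x => F x)
    (g := fun s => solq s + (p - q)) (g' := fun s => F (solq s))
    (εf := 0) (εg := (K:ℝ) * ‖p - q‖) (δ := 0)
    (fun _ => hlip)
    (fun s hs => (hsold s hs).continuousWithinAt)
    (fun s hs => hasDerivWithinAt_Ici_of_Icc hs (hsold s (Ico_subset_Icc_self hs)))
    (fun s _ => by simp)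
    (fun s hs => ((hsolqd s hs).continuousWithinAt).add continuousWithinAt_const)
    (fun s hs => (hasDerivWithinAt_Ici_of_Icc hs (hsolqd s (Ico_subset_Icc_self hs))).add_const _)
    (fun s _ => by
      have h := hlip.dist_le_mul (solq s) (solq s + (p - q))
      simpa [dist_self_add_right] using h)
    (by
      have hqp : q + (p - q) = p := by abel
      simp [hsol0, hsolq0, hqp])
    t ht
  have hKne : (K:ℝ) ≠ 0 := ne_of_gt hKpos
  have heval : gronwallBound 0 (K:ℝ) (0 + (K:ℝ) * ‖p - q‖) (t - 0) =
      ‖p - q‖ * (Real.exp ((K:ℝ) * t) - 1) := by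
    rw [gronwallBound_of_K_ne_0 hKne]
    simp only [sub_zero, zero_mul, zero_add]
    field_simp
  rw [heval] at hgr
  have hKt : (K:ℝ) * t ≤ 1/2 := by
    refine le_trans ?_ hsmall
    exact mul_le_mul_of_nonneg_left ht.2 (NNReal.coe_nonneg K)
  have hexp : Real.exp ((K:ℝ) * t) - 1 ≤ 2 * ((K:ℝ) * t) := by
    have := exp_le_one_add_two_mul (mul_nonneg (NNReal.coe_nonneg K) ht.1) hKt
    linarith
  have hlhs : dist (sol t) (solq t + (p - q)) = ‖sol t - solq t - (p - q)‖ := by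
    rw [dist_eq_norm]
    congr 1
    abel
  rw [hlhs] at hgr
  have ht2 : (K:ℝ) * t ≤ (K:ℝ) * T := mul_le_mul_of_nonneg_left ht.2 (NNReal.coe_nonneg K)
  calc ‖sol t - solq t - (p - q)‖ ≤ ‖p - q‖ * (Real.exp ((K:ℝ) * t) - 1) := hgr
    _ ≤ ‖p - q‖ * (2 * ((K:ℝ) * t)) := by
        refine mul_le_mul_of_nonneg_left hexp (norm_nonneg _)
    _ ≤ ‖p - q‖ * (2 * ((K:ℝ) * T)) := by
        refine mul_le_mul_of_nonneg_left (by linarith) (norm_nonneg _)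
    _ = 2 * (K:ℝ) * T * ‖p - q‖ := by ring

lemma est_e (hdF : Differentiable ℝ F) (hM : ∀ x, ‖F x‖ ≤ M)
    (hK : ∀ x, ‖fderiv ℝ F x‖ ≤ K) (hlip : LipschitzWith K F) (hK1 : 1 ≤ K)
    (hK₂ : LipschitzWith K₂ (fderiv ℝ F)) (hsmall : (K:ℝ) * T ≤ 1/2)
    (hsol0 : sol 0 = p)
    (hsold : ∀ t ∈ Icc (0:ℝ) T, HasDerivWithinAt sol (F (sol t)) (Icc (0:ℝ) T) t)
    (hsolq0 : solq 0 = q)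
    (hsolqd : ∀ t ∈ Icc (0:ℝ) T, HasDerivWithinAt solq (F (solq t)) (Icc (0:ℝ) T) t) :
    ∀ t ∈ Icc (0:ℝ) T, ‖sol t - solq t - (p - q) - t • (F p - F q)‖ ≤
      ((2 * (K:ℝ)^2 + 2 * (K₂:ℝ) * M) * T * ‖p - q‖) * t := by
  have hM0 : 0 ≤ M := (norm_nonneg _).trans (hM p)
  refine norm_le_mul_of_deriv
    (w := fun t => F (sol t) - F (solq t) - (F p - F q)) ?_ ?_ ?_
  · intro t ht
    have h2 : HasDerivWithinAt (fun t : ℝ => t • (F p - F q)) ((1:ℝ) • (F p - F q))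
        (Icc (0:ℝ) T) t :=
      ((hasDerivAt_id t).smul_const (F p - F q)).hasDerivWithinAt
    simpa [Pi.sub_def] using (((hsold t ht).sub (hsolqd t ht)).sub_const (p - q)).sub h2
  · simp [hsol0, hsolq0]
  · intro t ht
    have hT0 : 0 ≤ T := le_trans ht.1 ht.2
    have hdd := norm_dd_le hdF hK hK₂ (sol t) (solq t) p q
    have hrw : sol t - p - (solq t - q) = sol t - solq t - (p - q) := by abel
    rw [hrw] at hdd
    have hd := est_d hlip hK1 hsmall hsol0 hsold hsolq0 hsolqd t ht
    have h2KT : 2 * (K:ℝ) * T ≤ 1 := by linarith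
    have hdle : ‖sol t - solq t - (p - q)‖ ≤ ‖p - q‖ :=
      hd.trans (by nlinarith [norm_nonneg (p - q)])
    have ha := est_a hM hsolq0 hsolqd t ht
    have hMtT : M * t ≤ M * T := mul_le_mul_of_nonneg_left ht.2 hM0
    calc ‖F (sol t) - F (solq t) - (F p - F q)‖
        ≤ (K:ℝ) * ‖sol t - solq t - (p - q)‖ +
          (K₂:ℝ) * (‖p - q‖ + ‖sol t - solq t - (p - q)‖) * ‖solq t - q‖ := hdd
      _ ≤ (K:ℝ) * (2 * (K:ℝ) * T * ‖p - q‖) +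
          (K₂:ℝ) * (‖p - q‖ + ‖p - q‖) * (M * T) := by
          gcongr
          exact le_trans ha hMtT
      _ = ((2 * (K:ℝ)^2 + 2 * (K₂:ℝ) * M) * T * ‖p - q‖) := by ring

end Flow

lemma bounds_of_compactSupport {F : E → E} (hF : ContDiff ℝ 2 F)
    (hsupp : HasCompactSupport F) :
    ∃ (M : ℝ) (K K₂ : ℝ≥0), 0 ≤ M ∧ 1 ≤ K ∧ (∀ x, ‖F x‖ ≤ M) ∧
      (∀ x, ‖fderiv ℝ F x‖ ≤ K) ∧ LipschitzWith K F ∧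
      LipschitzWith K₂ (fderiv ℝ F) := by
  obtain ⟨M, hM⟩ := hF.continuous.bounded_above_of_compact_support hsupp
  have hfd1 : ContDiff ℝ 1 (fderiv ℝ F) := hF.fderiv_right (by norm_num)
  obtain ⟨C, hC⟩ := hfd1.continuous.bounded_above_of_compact_support (hsupp.fderiv ℝ)
  set K : ℝ≥0 := C.toNNReal ⊔ 1 with hKdef
  have hKC : ∀ x, ‖fderiv ℝ F x‖ ≤ K := fun x =>
    (hC x).trans ((Real.le_coe_toNNReal C).trans (by exact_mod_cast le_sup_left))
  have hlip : LipschitzWith K F := by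
    refine lipschitzWith_of_nnnorm_fderiv_le (𝕜 := ℝ) (hF.differentiable (by norm_num)) (fun x => ?_)
    rw [← NNReal.coe_le_coe, coe_nnnorm]
    exact hKC x
  have hfd1' : Differentiable ℝ (fderiv ℝ F) := hfd1.differentiable (by norm_num)
  obtain ⟨C₂, hC₂⟩ :=
    ((hfd1.fderiv_right (m := 0) (by norm_num)).continuous).bounded_above_of_compact_support
      ((hsupp.fderiv ℝ).fderiv ℝ)
  have hK₂ : LipschitzWith C₂.toNNReal (fderiv ℝ F) := by
    refine lipschitzWith_of_nnnorm_fderiv_le (𝕜 := ℝ) hfd1' (fun x => ?_)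
    rw [← NNReal.coe_le_coe, coe_nnnorm]
    exact (hC₂ x).trans (Real.le_coe_toNNReal C₂)
  exact ⟨M, K, C₂.toNNReal, (norm_nonneg _).trans (hM 0), le_sup_right, hM, hKC, hlip, hK₂⟩

lemma mul_div_add_one_le {a b : ℝ} (ha : 0 ≤ a) (hb : 0 < b) : a * (b / (a + 1)) ≤ b := by
  rw [← mul_div_assoc, div_le_iff₀ (by linarith)]
  nlinarith

end TwoCycleAux


namespace TwoCycleAux

set_option maxHeartbeats 0 in
theorem main_aux {E : Type*} [NormedAddCommGroup E] [InnerProductSpace ℝ E]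
    [FiniteDimensional ℝ E]
    (f₁ f₂ : E → E) (hf₁ : ContDiff ℝ 2 f₁) (hf₂ : ContDiff ℝ 2 f₂)
    (x₀ : E) (k₁ k₂ : ℝ) (hk₁ : 0 < k₁) (hk₂ : 0 < k₂)
    (hstasis : k₁ • f₁ x₀ + k₂ • f₂ x₀ = 0)
    (hns : Function.Bijective ⇑(fderiv ℝ (fun x => k₁ • f₁ x + k₂ • f₂ x) x₀)) :
    ∀ ε > 0, ∃ (κ δ : ℝ) (x : ℝ → E),
      0 < κ ∧ κ < δ ∧ Continuous x ∧
      (∀ t, x (t + δ) = x t) ∧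
      (∀ t ∈ Set.Icc (0 : ℝ) κ,
        HasDerivWithinAt x (f₁ (x t)) (Set.Icc (0 : ℝ) κ) t) ∧
      (∀ t ∈ Set.Icc κ δ,
        HasDerivWithinAt x (f₂ (x t)) (Set.Icc κ δ) t) ∧
      (∀ t, ‖x t - x₀‖ < ε) := by
  classical
  intro ε hε
  -- cutoff fields
  let χ : ContDiffBump x₀ := ⟨1, 2, one_pos, one_lt_two⟩
  set F₁ : E → E := fun x => χ x • f₁ x with hF₁def
  set F₂ : E → E := fun x => χ x • f₂ x with hF₂def
  have hχc : ContDiff ℝ 2 (χ : E → ℝ) := χ.contDiff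
  have hF₁c : ContDiff ℝ 2 F₁ := hχc.smul hf₁
  have hF₂c : ContDiff ℝ 2 F₂ := hχc.smul hf₂
  have hχsupp : HasCompactSupport (χ : E → ℝ) := χ.hasCompactSupport
  have hF₁supp : HasCompactSupport F₁ := hχsupp.smul_right
  have hF₂supp : HasCompactSupport F₂ := hχsupp.smul_right
  have hF₁eq : ∀ x ∈ closedBall x₀ 1, F₁ x = f₁ x := fun x hx => by
    rw [hF₁def]; simp only []; rw [χ.one_of_mem_closedBall hx, one_smul]
  have hF₂eq : ∀ x ∈ closedBall x₀ 1, F₂ x = f₂ x := fun x hx => by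
    rw [hF₂def]; simp only []; rw [χ.one_of_mem_closedBall hx, one_smul]
  -- uniform constants
  obtain ⟨M₁, Ka, K₂a, hM₁0, hKa1, hM₁, hKab, hlipa, hK₂a⟩ :=
    bounds_of_compactSupport hF₁c hF₁supp
  obtain ⟨M₂, Kb, K₂b, hM₂0, hKb1, hM₂, hKbb, hlipb, hK₂b⟩ :=
    bounds_of_compactSupport hF₂c hF₂supp
  set M : ℝ := max M₁ M₂ with hMdef
  set K : ℝ≥0 := Ka ⊔ Kb with hKdef
  set K₂ : ℝ≥0 := K₂a ⊔ K₂b with hK₂def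
  have hM0 : 0 ≤ M := le_trans hM₁0 (le_max_left _ _)
  have hK1 : 1 ≤ K := le_trans hKa1 le_sup_left
  have hMb₁ : ∀ x, ‖F₁ x‖ ≤ M := fun x => (hM₁ x).trans (le_max_left _ _)
  have hMb₂ : ∀ x, ‖F₂ x‖ ≤ M := fun x => (hM₂ x).trans (le_max_right _ _)
  have hKb₁ : ∀ x, ‖fderiv ℝ F₁ x‖ ≤ K := fun x =>
    (hKab x).trans (by exact_mod_cast le_sup_left)
  have hKb₂ : ∀ x, ‖fderiv ℝ F₂ x‖ ≤ K := fun x =>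
    (hKbb x).trans (by exact_mod_cast le_sup_right)
  have hlipK₁ : LipschitzWith K F₁ := hlipa.weaken le_sup_left
  have hlipK₂ : LipschitzWith K F₂ := hlipb.weaken le_sup_right
  have hK₂b₁ : LipschitzWith K₂ (fderiv ℝ F₁) := hK₂a.weaken le_sup_left
  have hK₂b₂ : LipschitzWith K₂ (fderiv ℝ F₂) := hK₂b.weaken le_sup_right
  have hdF₁ : Differentiable ℝ F₁ := hF₁c.differentiable (by norm_num)
  have hdF₂ : Differentiable ℝ F₂ := hF₂c.differentiable (by norm_num)
  -- modified stasis field and its derivative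
  set gV : E → E := fun x => k₁ • F₁ x + k₂ • F₂ x with hgVdef
  set A := fderiv ℝ (fun x => k₁ • f₁ x + k₂ • f₂ x) x₀ with hAdef
  have hgVeq : ∀ x ∈ closedBall x₀ 1, gV x = k₁ • f₁ x + k₂ • f₂ x := fun x hx => by
    rw [hgVdef]; simp only []; rw [hF₁eq x hx, hF₂eq x hx]
  have hgV0 : gV x₀ = 0 := by
    rw [hgVeq x₀ (mem_closedBall_self zero_le_one)]; exact hstasis
  have hgVc : ContDiff ℝ 2 gV := (hF₁c.const_smul k₁).add (hF₂c.const_smul k₂)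
  have hfdA : fderiv ℝ gV x₀ = A := by
    rw [hAdef]
    apply Filter.EventuallyEq.fderiv_eq
    filter_upwards [Metric.ball_mem_nhds x₀ one_pos] with x hx
    exact hgVeq x (ball_subset_closedBall hx)
  -- the inverse of A
  let eL : E ≃ₗ[ℝ] E := LinearEquiv.ofBijective (↑A : E →ₗ[ℝ] E) hns
  let e : E ≃L[ℝ] E := eL.toContinuousLinearEquiv
  have he : ∀ z, e z = A z := fun z => rfl
  set cc : ℝ := ‖(e.symm : E →L[ℝ] E)‖ + 1 with hccdef
  have hcc1 : 1 ≤ cc := by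
    rw [hccdef]; linarith [norm_nonneg (e.symm : E →L[ℝ] E)]
  have hcc0 : 0 < cc := lt_of_lt_of_le one_pos hcc1
  have hesymm : ∀ z : E, ‖e.symm z‖ ≤ cc * ‖z‖ := by
    intro z
    have h := (e.symm : E →L[ℝ] E).le_opNorm z
    rw [ContinuousLinearEquiv.coe_coe] at h
    refine h.trans (mul_le_mul_of_nonneg_right ?_ (norm_nonneg z))
    rw [hccdef]; linarith
  -- radius where fderiv gV is close to A
  have hfdc : Continuous (fderiv ℝ gV) := hgVc.continuous_fderiv (by norm_num)
  have hsmallnhds : {x | ‖fderiv ℝ gV x - A‖ < 1/(4*cc)} ∈ 𝓝 x₀ := by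
    have hcont : Continuous fun x => ‖fderiv ℝ gV x - A‖ :=
      (hfdc.sub continuous_const).norm
    have h0 : ‖fderiv ℝ gV x₀ - A‖ < 1/(4*cc) := by
      rw [hfdA, sub_self, norm_zero]; positivity
    exact hcont.continuousAt.preimage_mem_nhds (isOpen_Iio.mem_nhds h0)
  obtain ⟨rb, hrbpos, hrbsub⟩ := Metric.mem_nhds_iff.mp hsmallnhds
  set r : ℝ := min (rb/2) (min (1/2) (ε/2)) with hrdef
  have hrpos : 0 < r := by
    rw [hrdef]
    exact lt_min (by linarith) (lt_min (by norm_num) (by linarith))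
  have hr12 : r ≤ 1/2 := le_trans (min_le_right _ _) (min_le_left _ _)
  have hrε : r ≤ ε/2 := le_trans (min_le_right _ _) (min_le_right _ _)
  have hrsub : closedBall x₀ r ⊆ ball x₀ rb := fun x hx => by
    rw [mem_ball]
    have : dist x x₀ ≤ r := mem_closedBall.mp hx
    have hrb2 : r ≤ rb/2 := min_le_left _ _
    linarith
  have hGA : ∀ p ∈ closedBall x₀ r, ∀ q ∈ closedBall x₀ r,
      ‖gV p - gV q - A (p - q)‖ ≤ 1/(4*cc) * ‖p - q‖ := by
    intro p hp q hq
    exact (convex_closedBall x₀ r).norm_image_sub_le_of_norm_hasFDerivWithin_le'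
      (fun x _ => ((hgVc.differentiable (by norm_num) x).hasFDerivAt).hasFDerivWithinAt)
      (fun x hx => le_of_lt (hrbsub (hrsub hx))) hq hp
  -- choice of u
  set km : ℝ := max k₁ k₂ with hkmdef
  have hk₁km : k₁ ≤ km := le_max_left _ _
  have hk₂km : k₂ ≤ km := le_max_right _ _
  have hkmpos : 0 < km := lt_of_lt_of_le hk₁ hk₁km
  set CC : ℝ := 2*(K:ℝ)^2 + 2*(K₂:ℝ)*M with hCCdef
  have hCC0 : 0 ≤ CC := by
    rw [hCCdef]
    have h1 : (0:ℝ) ≤ 2*(K:ℝ)^2 := by positivity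
    have h2 : (0:ℝ) ≤ 2*(K₂:ℝ)*M :=
      mul_nonneg (by positivity) hM0
    linarith
  set C₁ : ℝ := 3*(K:ℝ)*M*km^2 with hC₁def
  have hC₁0 : 0 ≤ C₁ := by
    rw [hC₁def]
    exact mul_nonneg (mul_nonneg (by positivity) hM0) (sq_nonneg km)
  set C₂ : ℝ := 4*CC*km^2 with hC₂def
  have hC₂0 : 0 ≤ C₂ := by
    rw [hC₂def]
    exact mul_nonneg (mul_nonneg (by norm_num) hCC0) (sq_nonneg km)
  have ha₁ : (0:ℝ) ≤ (K:ℝ)*km := mul_nonneg (NNReal.coe_nonneg K) hkmpos.le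
  have ha₂ : (0:ℝ) ≤ cc*C₂ := mul_nonneg hcc0.le hC₂0
  have ha₃ : (0:ℝ) ≤ cc*C₁ := mul_nonneg hcc0.le hC₁0
  have ha₄ : (0:ℝ) ≤ M*(k₁+k₂) := mul_nonneg hM0 (by linarith)
  set u : ℝ := min (min ((1/2)/((K:ℝ)*km+1)) ((1/4)/(cc*C₂+1)))
      (min ((r/2)/(cc*C₁+1)) ((r/2)/(M*(k₁+k₂)+1))) with hudef
  have hupos : 0 < u := by
    rw [hudef]
    refine lt_min (lt_min ?_ ?_) (lt_min ?_ ?_) <;>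
      exact div_pos (by linarith) (by linarith)
  have hukey : ∀ a b : ℝ, 0 ≤ a → 0 < b → u ≤ b/(a+1) → a*u ≤ b := fun a b ha hb hu =>
    le_trans (mul_le_mul_of_nonneg_left hu ha) (mul_div_add_one_le ha hb)
  have hu₁ : (K:ℝ)*km*u ≤ 1/2 :=
    hukey _ _ ha₁ one_half_pos ((min_le_left _ _).trans (min_le_left _ _))
  have hu₂ : cc*C₂*u ≤ 1/4 :=
    hukey _ _ ha₂ (by norm_num) ((min_le_left _ _).trans (min_le_right _ _))
  have hu₃ : cc*C₁*u ≤ r/2 :=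
    hukey _ _ ha₃ (by linarith) ((min_le_right _ _).trans (min_le_left _ _))
  have hu₄ : M*(k₁+k₂)*u ≤ r/2 :=
    hukey _ _ ha₄ (by linarith) ((min_le_right _ _).trans (min_le_right _ _))
  set T₁ : ℝ := k₁*u with hT₁def
  set T₂ : ℝ := k₂*u with hT₂def
  have hT₁pos : 0 < T₁ := mul_pos hk₁ hupos
  have hT₂pos : 0 < T₂ := mul_pos hk₂ hupos
  have hsmall₁ : (K:ℝ)*T₁ ≤ 1/2 := by
    refine le_trans ?_ hu₁
    rw [hT₁def, ← mul_assoc]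
    have : (K:ℝ)*k₁ ≤ (K:ℝ)*km := mul_le_mul_of_nonneg_left hk₁km (NNReal.coe_nonneg K)
    exact mul_le_mul_of_nonneg_right this hupos.le
  have hsmall₂ : (K:ℝ)*T₂ ≤ 1/2 := by
    refine le_trans ?_ hu₁
    rw [hT₂def, ← mul_assoc]
    have : (K:ℝ)*k₂ ≤ (K:ℝ)*km := mul_le_mul_of_nonneg_left hk₂km (NNReal.coe_nonneg K)
    exact mul_le_mul_of_nonneg_right this hupos.le
  -- flows
  choose Φ hΦ0 hΦd using fun p : E => exists_sol hlipK₁ hMb₁ hT₁pos p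
  choose Ψ hΨ0 hΨd using fun p : E => exists_sol hlipK₂ hMb₂ hT₂pos p
  set Pm : E → E := fun p => Ψ (Φ p T₁) T₂ with hPmdef
  have hT₁mem : T₁ ∈ Icc (0:ℝ) T₁ := right_mem_Icc.2 hT₁pos.le
  have hT₂mem : T₂ ∈ Icc (0:ℝ) T₂ := right_mem_Icc.2 hT₂pos.le
  -- first-order estimate E1
  have hE1 : ∀ p, ‖Pm p - p - u • gV p‖ ≤ C₁ * u^2 := by
    intro p
    set p' := Φ p T₁ with hp'def
    have hb₂ := est_b hMb₂ hlipK₂ (hΨ0 p') (hΨd p') T₂ hT₂mem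
    have hb₁ := est_b hMb₁ hlipK₁ (hΦ0 p) (hΦd p) T₁ hT₁mem
    have ha₁' := est_a hMb₁ (hΦ0 p) (hΦd p) T₁ hT₁mem
    have h3 : ‖T₂ • (F₂ p' - F₂ p)‖ ≤ T₂ * ((K:ℝ) * (M * T₁)) := by
      rw [norm_smul, Real.norm_eq_abs, abs_of_nonneg hT₂pos.le]
      have hl : ‖F₂ p' - F₂ p‖ ≤ (K:ℝ)*‖p' - p‖ := by
        have := hlipK₂.dist_le_mul p' p
        simpa [dist_eq_norm] using this
      refine mul_le_mul_of_nonneg_left (hl.trans ?_) hT₂pos.le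
      exact mul_le_mul_of_nonneg_left ha₁' (NNReal.coe_nonneg K)
    have hid : Pm p - p - u • gV p =
        (Ψ p' T₂ - p' - T₂ • F₂ p') + (Φ p T₁ - p - T₁ • F₁ p)
          + T₂ • (F₂ p' - F₂ p) := by
      have hu1 : u • gV p = T₁ • F₁ p + T₂ • F₂ p := by
        rw [hgVdef, hT₁def, hT₂def]
        simp only [smul_add, smul_smul]
        rw [mul_comm u k₁, mul_comm u k₂]
      rw [hPmdef, hu1]
      simp only [smul_sub, ← hp'def]
      abel
    rw [hid]
    calc ‖(Ψ p' T₂ - p' - T₂ • F₂ p') + (Φ p T₁ - p - T₁ • F₁ p) + T₂ • (F₂ p' - F₂ p)‖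
        ≤ ‖Ψ p' T₂ - p' - T₂ • F₂ p'‖ + ‖Φ p T₁ - p - T₁ • F₁ p‖
          + ‖T₂ • (F₂ p' - F₂ p)‖ := norm_add₃_le
      _ ≤ ((K:ℝ)*M*T₂)*T₂ + ((K:ℝ)*M*T₁)*T₁ + T₂*((K:ℝ)*(M*T₁)) :=
          add_le_add (add_le_add hb₂ hb₁) h3
      _ = (K:ℝ)*M*u^2 * (k₂^2 + k₁^2 + k₂*k₁) := by rw [hT₁def, hT₂def]; ring
      _ ≤ (K:ℝ)*M*u^2 * (3*km^2) := by
          refine mul_le_mul_of_nonneg_left ?_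
            (mul_nonneg (mul_nonneg (NNReal.coe_nonneg K) hM0) (sq_nonneg u))
          have e1 : k₁*k₁ ≤ km*km := mul_le_mul hk₁km hk₁km hk₁.le (hk₁.le.trans hk₁km)
          have e2 : k₂*k₂ ≤ km*km := mul_le_mul hk₂km hk₂km hk₂.le (hk₁.le.trans hk₁km)
          have e3 : k₂*k₁ ≤ km*km := mul_le_mul hk₂km hk₁km hk₁.le (hk₁.le.trans hk₁km)
          ring_nf
          ring_nf at e1 e2 e3
          linarith only [e1, e2, e3]
      _ = C₁ * u^2 := by rw [hC₁def]; ring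
  -- Lipschitz estimate E2
  have hE2 : ∀ p q, ‖(Pm p - p) - (Pm q - q) - u • (gV p - gV q)‖ ≤ C₂ * u^2 * ‖p - q‖ := by
    intro p q
    set p' := Φ p T₁ with hp'def
    set q' := Φ q T₁ with hq'def
    have hc₁ := est_c hlipK₁ hsmall₁ (hΦ0 p) (hΦd p) (hΦ0 q) (hΦd q) T₁ hT₁mem
    have he₂ := est_e hdF₂ hMb₂ hKb₂ hlipK₂ hK1 hK₂b₂ hsmall₂ (hΨ0 p') (hΨd p')
      (hΨ0 q') (hΨd q') T₂ hT₂mem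
    have he₁ := est_e hdF₁ hMb₁ hKb₁ hlipK₁ hK1 hK₂b₁ hsmall₁ (hΦ0 p) (hΦd p)
      (hΦ0 q) (hΦd q) T₁ hT₁mem
    have hd₁ := est_d hlipK₁ hK1 hsmall₁ (hΦ0 p) (hΦd p) (hΦ0 q) (hΦd q) T₁ hT₁mem
    have ha₁q := est_a hMb₁ (hΦ0 q) (hΦd q) T₁ hT₁mem
    have hdd := norm_dd_le hdF₂ hKb₂ hK₂b₂ p' q' p q
    have hrw : p' - p - (q' - q) = p' - q' - (p - q) := by abel
    rw [hrw] at hdd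
    have h2KT₁ : 2*(K:ℝ)*T₁ ≤ 1 := by linarith
    have hd₁' : ‖p' - q' - (p - q)‖ ≤ ‖p - q‖ := by
      refine hd₁.trans ?_
      calc 2*(K:ℝ)*T₁*‖p - q‖ ≤ 1*‖p - q‖ :=
            mul_le_mul_of_nonneg_right h2KT₁ (norm_nonneg _)
        _ = ‖p - q‖ := one_mul _
    have h3 : ‖T₂ • (F₂ p' - F₂ q' - (F₂ p - F₂ q))‖ ≤ T₂ * (CC * T₁ * ‖p - q‖) := by
      rw [norm_smul, Real.norm_eq_abs, abs_of_nonneg hT₂pos.le]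
      refine mul_le_mul_of_nonneg_left ?_ hT₂pos.le
      calc ‖F₂ p' - F₂ q' - (F₂ p - F₂ q)‖
          ≤ (K:ℝ)*‖p' - q' - (p - q)‖
            + (K₂:ℝ)*(‖p - q‖ + ‖p' - q' - (p - q)‖)*‖q' - q‖ := hdd
        _ ≤ (K:ℝ)*(2*(K:ℝ)*T₁*‖p - q‖) + (K₂:ℝ)*(‖p - q‖ + ‖p - q‖)*(M*T₁) := by
            gcongr
        _ = CC*T₁*‖p - q‖ := by rw [hCCdef]; ring
    have hid : (Pm p - p) - (Pm q - q) - u • (gV p - gV q) =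
        (Ψ p' T₂ - Ψ q' T₂ - (p' - q') - T₂ • (F₂ p' - F₂ q'))
        + (Φ p T₁ - Φ q T₁ - (p - q) - T₁ • (F₁ p - F₁ q))
        + T₂ • (F₂ p' - F₂ q' - (F₂ p - F₂ q)) := by
      have hu1 : u • (gV p - gV q) =
          T₁ • (F₁ p - F₁ q) + T₂ • (F₂ p - F₂ q) := by
        rw [hgVdef, hT₁def, hT₂def]
        simp only [smul_sub, smul_add, smul_smul]
        rw [mul_comm u k₁, mul_comm u k₂]
        abel
      rw [hPmdef, hu1]
      simp only [smul_sub, ← hp'def, ← hq'def]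
      abel
    rw [hid]
    have hc₁' : ‖p' - q'‖ ≤ 2*‖p - q‖ := hc₁
    calc ‖(Ψ p' T₂ - Ψ q' T₂ - (p' - q') - T₂ • (F₂ p' - F₂ q'))
          + (Φ p T₁ - Φ q T₁ - (p - q) - T₁ • (F₁ p - F₁ q))
          + T₂ • (F₂ p' - F₂ q' - (F₂ p - F₂ q))‖
        ≤ ‖Ψ p' T₂ - Ψ q' T₂ - (p' - q') - T₂ • (F₂ p' - F₂ q')‖
          + ‖Φ p T₁ - Φ q T₁ - (p - q) - T₁ • (F₁ p - F₁ q)‖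
          + ‖T₂ • (F₂ p' - F₂ q' - (F₂ p - F₂ q))‖ := norm_add₃_le
      _ ≤ (CC * T₂ * ‖p' - q'‖) * T₂ + (CC * T₁ * ‖p - q‖) * T₁
          + T₂ * (CC * T₁ * ‖p - q‖) := by
          refine add_le_add (add_le_add ?_ ?_) h3
          · have := he₂
            rw [hCCdef]
            exact this
          · have := he₁
            rw [hCCdef]
            exact this
      _ ≤ (CC * T₂ * (2*‖p - q‖)) * T₂ + (CC * T₁ * ‖p - q‖) * T₁
          + T₂ * (CC * T₁ * ‖p - q‖) := by
          gcongr
      _ = CC*u^2*(2*k₂^2 + k₁^2 + k₂*k₁) * ‖p - q‖ := by rw [hT₁def, hT₂def]; ring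
      _ ≤ CC*u^2*(4*km^2) * ‖p - q‖ := by
          refine mul_le_mul_of_nonneg_right ?_ (norm_nonneg _)
          refine mul_le_mul_of_nonneg_left ?_ (mul_nonneg hCC0 (sq_nonneg u))
          have e1 : k₁*k₁ ≤ km*km := mul_le_mul hk₁km hk₁km hk₁.le (hk₁.le.trans hk₁km)
          have e2 : k₂*k₂ ≤ km*km := mul_le_mul hk₂km hk₂km hk₂.le (hk₁.le.trans hk₁km)
          have e3 : k₂*k₁ ≤ km*km := mul_le_mul hk₂km hk₁km hk₁.le (hk₁.le.trans hk₁km)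
          ring_nf
          ring_nf at e1 e2 e3
          linarith only [e1, e2, e3]
      _ = C₂ * u^2 * ‖p - q‖ := by rw [hC₂def]; ring
  -- the Newton-type contraction
  have hune : u ≠ 0 := ne_of_gt hupos
  set N : E → E := fun p => p - e.symm (u⁻¹ • (Pm p - p)) with hNdef
  have hNdiff : ∀ p q : E, N p - N q =
      e.symm (A (p - q) - u⁻¹ • ((Pm p - p) - (Pm q - q))) := by
    intro p q
    have h1 : e.symm (A (p - q)) = p - q := by rw [← he (p - q)]; exact e.symm_apply_apply _
    have h2 : u⁻¹ • ((Pm p - p) - (Pm q - q)) = u⁻¹ • (Pm p - p) - u⁻¹ • (Pm q - q) :=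
      smul_sub _ _ _
    have h3 : e.symm (A (p - q) - (u⁻¹ • (Pm p - p) - u⁻¹ • (Pm q - q)))
        = e.symm (A (p - q)) - (e.symm (u⁻¹ • (Pm p - p)) - e.symm (u⁻¹ • (Pm q - q))) := by
      rw [map_sub e.symm (A (p - q)) (u⁻¹ • (Pm p - p) - u⁻¹ • (Pm q - q)),
        map_sub e.symm (u⁻¹ • (Pm p - p)) (u⁻¹ • (Pm q - q))]
    rw [h2, h3, h1]
    simp only [hNdef]
    abel
  have hcontr : ∀ p ∈ closedBall x₀ r, ∀ q ∈ closedBall x₀ r,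
      ‖N p - N q‖ ≤ (1/2) * ‖p - q‖ := by
    intro p hp q hq
    rw [hNdiff]
    have hinner : A (p - q) - u⁻¹ • ((Pm p - p) - (Pm q - q)) =
        (A (p - q) - (gV p - gV q))
        + ((gV p - gV q) - u⁻¹ • ((Pm p - p) - (Pm q - q))) := by abel
    have h2 : ‖(gV p - gV q) - u⁻¹ • ((Pm p - p) - (Pm q - q))‖ ≤ C₂ * u * ‖p - q‖ := by
      have hrw2 : (gV p - gV q) - u⁻¹ • ((Pm p - p) - (Pm q - q)) =
          (-u⁻¹) • ((Pm p - p) - (Pm q - q) - u • (gV p - gV q)) := by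
        have hiu : u⁻¹ • (u • (gV p - gV q)) = gV p - gV q := by
          rw [smul_smul, inv_mul_cancel₀ hune, one_smul]
        rw [neg_smul, smul_sub u⁻¹ ((Pm p - p) - (Pm q - q)) (u • (gV p - gV q)), hiu]
        abel
      rw [hrw2, norm_smul, Real.norm_eq_abs, abs_neg, abs_of_pos (inv_pos.2 hupos)]
      calc u⁻¹ * ‖(Pm p - p) - (Pm q - q) - u • (gV p - gV q)‖
          ≤ u⁻¹ * (C₂ * u^2 * ‖p - q‖) :=
            mul_le_mul_of_nonneg_left (hE2 p q) (inv_pos.2 hupos).le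
        _ = C₂ * u * ‖p - q‖ := by field_simp
    have h1 : ‖A (p - q) - (gV p - gV q)‖ ≤ 1/(4*cc) * ‖p - q‖ := by
      rw [norm_sub_rev]; exact hGA p hp q hq
    have hC₂u : C₂ * u ≤ 1/(4*cc) := by
      rw [le_div_iff₀ (by positivity)]
      calc C₂ * u * (4 * cc) = 4 * (cc * C₂ * u) := by ring
        _ ≤ 4 * (1/4) := mul_le_mul_of_nonneg_left hu₂ (by norm_num)
        _ = 1 := by norm_num
    have hsum : ‖A (p - q) - u⁻¹ • ((Pm p - p) - (Pm q - q))‖ ≤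
        1/(4*cc)*‖p - q‖ + 1/(4*cc)*‖p - q‖ := by
      rw [hinner]
      refine (norm_add_le _ _).trans (add_le_add h1 (h2.trans ?_))
      exact mul_le_mul_of_nonneg_right hC₂u (norm_nonneg _)
    calc ‖e.symm (A (p - q) - u⁻¹ • ((Pm p - p) - (Pm q - q)))‖
        ≤ cc * ‖A (p - q) - u⁻¹ • ((Pm p - p) - (Pm q - q))‖ := hesymm _
      _ ≤ cc * (1/(4*cc)*‖p - q‖ + 1/(4*cc)*‖p - q‖) :=
          mul_le_mul_of_nonneg_left hsum hcc0.le
      _ = (1/2) * ‖p - q‖ := by field_simp; ring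
  have hNx₀ : ‖N x₀ - x₀‖ ≤ cc * (C₁ * u) := by
    have h0 : N x₀ - x₀ = - e.symm (u⁻¹ • (Pm x₀ - x₀)) := by simp only [hNdef]; abel
    rw [h0, norm_neg]
    have h1 : ‖Pm x₀ - x₀‖ ≤ C₁*u^2 := by
      have := hE1 x₀
      rwa [hgV0, smul_zero, sub_zero] at this
    calc ‖e.symm (u⁻¹ • (Pm x₀ - x₀))‖ ≤ cc * ‖u⁻¹ • (Pm x₀ - x₀)‖ := hesymm _
      _ = cc * (u⁻¹ * ‖Pm x₀ - x₀‖) := by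
          rw [norm_smul, Real.norm_eq_abs, abs_of_pos (inv_pos.2 hupos)]
      _ ≤ cc * (u⁻¹ * (C₁*u^2)) := by
          refine mul_le_mul_of_nonneg_left ?_ hcc0.le
          exact mul_le_mul_of_nonneg_left h1 (inv_pos.2 hupos).le
      _ = cc * (C₁*u) := by field_simp
  have hmapsN : MapsTo N (closedBall x₀ r) (closedBall x₀ r) := by
    intro p hp
    rw [mem_closedBall, dist_eq_norm]
    have htri : N p - x₀ = (N p - N x₀) + (N x₀ - x₀) := by abel
    have hpr : ‖p - x₀‖ ≤ r := by
      rw [← dist_eq_norm]; exact mem_closedBall.mp hp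
    calc ‖N p - x₀‖ ≤ ‖N p - N x₀‖ + ‖N x₀ - x₀‖ := by rw [htri]; exact norm_add_le _ _
      _ ≤ (1/2)*‖p - x₀‖ + cc*(C₁*u) :=
          add_le_add (hcontr p hp x₀ (mem_closedBall_self hrpos.le)) hNx₀
      _ ≤ (1/2)*r + r/2 := by
          refine add_le_add (by linarith) ?_
          calc cc*(C₁*u) = cc*C₁*u := by ring
            _ ≤ r/2 := hu₃
      _ = r := by ring
  -- fixed point
  have hcomplete : IsComplete (closedBall x₀ r : Set E) :=
    Metric.isClosed_closedBall.isComplete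
  have hcw : ContractingWith (1/2 : ℝ≥0) (hmapsN.restrict N _ _) := by
    constructor
    · rw [← NNReal.coe_lt_coe]; norm_num
    · apply LipschitzWith.of_dist_le_mul
      rintro ⟨p, hp⟩ ⟨q, hq⟩
      have := hcontr p hp q hq
      rw [Subtype.dist_eq, MapsTo.val_restrict_apply, MapsTo.val_restrict_apply,
        Subtype.dist_eq]
      rw [dist_eq_norm, dist_eq_norm]
      have hhalf : ((1/2 : ℝ≥0) : ℝ) = 1/2 := by norm_num
      rw [hhalf]
      exact this
  obtain ⟨y, hys, hfix, -, -⟩ := ContractingWith.exists_fixedPoint' hcomplete hmapsN hcw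
    (mem_closedBall_self hrpos.le) (edist_ne_top _ _)
  have hPy : Pm y = y := by
    have h : N y = y := hfix
    have h2 : e.symm (u⁻¹ • (Pm y - y)) = 0 := by
      rw [hNdef] at h
      simp only [] at h
      have := sub_eq_self.mp h
      exact this
    have h3 : u⁻¹ • (Pm y - y) = 0 := by
      have := e.symm.map_eq_zero_iff.mp h2
      exact this
    have h4 : Pm y - y = 0 := by
      rcases smul_eq_zero.mp h3 with h' | h'
      · exact absurd h' (inv_ne_zero hune)
      · exact h'
    exact sub_eq_zero.mp h4
  -- assemble the trajectory
  set y' := Φ y T₁ with hy'def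
  set δd : ℝ := T₁ + T₂ with hδddef
  have hδdpos : 0 < δd := by rw [hδddef]; linarith
  have hκδ : T₁ < δd := by rw [hδddef]; linarith
  set Y : ℝ → E := fun t => if t ≤ T₁ then Φ y t else Ψ y' (t - T₁) with hYdef
  have hY0 : Y 0 = y := by
    rw [hYdef]; simp only []
    rw [if_pos hT₁pos.le, hΦ0]
  have hYδ : Y δd = y := by
    rw [hYdef]; simp only []
    rw [if_neg (by rw [hδddef]; intro h; linarith : ¬ δd ≤ T₁)]
    have hs : δd - T₁ = T₂ := by rw [hδddef]; ring
    rw [hs, hy'def]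
    exact hPy
  have hYκ : ∀ t ∈ Icc (0:ℝ) T₁, Y t = Φ y t := fun t ht => if_pos ht.2
  have hYright : ∀ t ∈ Icc T₁ δd, Y t = Ψ y' (t - T₁) := by
    intro t ht
    rcases eq_or_lt_of_le ht.1 with h | h
    · rw [hYdef]; simp only []
      rw [if_pos h.symm.le, ← h, sub_self, hΨ0, hy'def]
    · exact if_neg (not_le.mpr h)
  have haΦ := est_a hMb₁ (hΦ0 y) (hΦd y)
  have haΨ := est_a hMb₂ (hΨ0 y') (hΨd y')
  have hyr : ‖y - x₀‖ ≤ r := by rw [← dist_eq_norm]; exact mem_closedBall.mp hys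
  have hy'bd : ‖y' - y‖ ≤ M*T₁ := by
    have := haΦ T₁ hT₁mem
    rwa [← hy'def] at this
  have hMδ : M*δd ≤ r/2 := by
    have hh : M*(k₁+k₂)*u = M*δd := by rw [hδddef, hT₁def, hT₂def]; ring
    have h := hu₄
    rw [hh] at h
    exact h
  have hYbd : ∀ t ∈ Icc (0:ℝ) δd, ‖Y t - x₀‖ ≤ r + r/2 := by
    intro t ht
    by_cases h : t ≤ T₁
    · rw [hYκ t ⟨ht.1, h⟩]
      have htri := dist_triangle (Φ y t) y x₀
      rw [dist_eq_norm, dist_eq_norm, dist_eq_norm] at htri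
      have h1 : ‖Φ y t - y‖ ≤ M*t := haΦ t ⟨ht.1, h⟩
      have h2 : M*t ≤ M*δd := mul_le_mul_of_nonneg_left ht.2 hM0
      calc ‖Φ y t - x₀‖ ≤ ‖Φ y t - y‖ + ‖y - x₀‖ := htri
        _ ≤ M*δd + r := by linarith only [h1, h2, hyr]
        _ ≤ r + r/2 := by linarith only [hMδ]
    · push_neg at h
      rw [hYright t ⟨h.le, ht.2⟩]
      have ht2 : t ≤ T₁ + T₂ := by rw [← hδddef]; exact ht.2
      have hmem : t - T₁ ∈ Icc (0:ℝ) T₂ := ⟨by linarith, by linarith⟩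
      have h1 : ‖Ψ y' (t - T₁) - y'‖ ≤ M*(t - T₁) := haΨ _ hmem
      have htri1 := dist_triangle (Ψ y' (t - T₁)) y' x₀
      have htri2 := dist_triangle y' y x₀
      rw [dist_eq_norm, dist_eq_norm, dist_eq_norm] at htri1
      rw [dist_eq_norm, dist_eq_norm, dist_eq_norm] at htri2
      have hMt : M*(t - T₁) + M*T₁ = M*t := by ring
      have h2 : M*t ≤ M*δd := mul_le_mul_of_nonneg_left ht.2 hM0
      calc ‖Ψ y' (t - T₁) - x₀‖ ≤ ‖Ψ y' (t - T₁) - y'‖ + ‖y' - x₀‖ := htri1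
        _ ≤ M*(t - T₁) + (‖y' - y‖ + ‖y - x₀‖) := add_le_add h1 htri2
        _ ≤ M*(t - T₁) + (M*T₁ + r) := by linarith only [hy'bd, hyr]
        _ = M*t + r := by ring
        _ ≤ r/2 + r := add_le_add (le_trans h2 hMδ) le_rfl
        _ = r + r/2 := by ring
  have hball1 : ∀ t ∈ Icc (0:ℝ) δd, Y t ∈ closedBall x₀ 1 := by
    intro t ht
    rw [mem_closedBall, dist_eq_norm]
    have := hYbd t ht
    linarith only [this, hr12]
  -- continuity of Y on [0, δd]
  have hΦcont : ContinuousOn (Φ y) (Icc 0 T₁) :=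
    fun t ht => (hΦd y t ht).continuousWithinAt
  have hΨcont : ContinuousOn (fun t : ℝ => Ψ y' (t - T₁)) (Icc T₁ δd) := by
    have hmapsto : MapsTo (fun t : ℝ => t - T₁) (Icc T₁ δd) (Icc (0:ℝ) T₂) := by
      intro t ht
      have ht2 : t ≤ T₁ + T₂ := by rw [← hδddef]; exact ht.2
      exact ⟨by show (0:ℝ) ≤ t - T₁; linarith only [ht.1],
        by show t - T₁ ≤ T₂; linarith only [ht2]⟩
    exact ContinuousOn.comp (fun s hs => (hΨd y' s hs).continuousWithinAt)
      ((continuous_id.sub continuous_const).continuousOn) hmapsto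
  have hYcont : ContinuousOn Y (Icc 0 δd) := by
    have hsub : Icc (0:ℝ) δd ⊆ Icc 0 T₁ ∪ Icc T₁ δd := by
      intro t ht
      by_cases h : t ≤ T₁
      · exact Or.inl ⟨ht.1, h⟩
      · exact Or.inr ⟨le_of_not_ge h, ht.2⟩
    refine ContinuousOn.mono (fun t ht => ?_) hsub
    have c₁ : ContinuousWithinAt Y (Icc (0:ℝ) T₁) t := by
      by_cases hmem : t ∈ Icc (0:ℝ) T₁
      · exact (hΦcont t hmem).congr hYκ (hYκ t hmem)
      · exact continuousWithinAt_of_notMem_closure (by rwa [isClosed_Icc.closure_eq])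
    have c₂ : ContinuousWithinAt Y (Icc T₁ δd) t := by
      by_cases hmem : t ∈ Icc T₁ δd
      · exact (hΨcont t hmem).congr hYright (hYright t hmem)
      · exact continuousWithinAt_of_notMem_closure (by rwa [isClosed_Icc.closure_eq])
    exact c₁.union c₂
  -- periodic extension
  set x : ℝ → E := fun t => Y (t - ⌊t / δd⌋ * δd) with hxdef
  have hfract : ∀ t : ℝ, t - ⌊t / δd⌋ * δd ∈ Ico (0:ℝ) δd := fun t =>
    ⟨Int.sub_floor_div_mul_nonneg t hδdpos, Int.sub_floor_div_mul_lt t hδdpos⟩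
  have hxY : ∀ s ∈ Icc (0:ℝ) δd, x s = Y s := by
    intro s hs
    rcases lt_or_eq_of_le hs.2 with h | h
    · have hfl : ⌊s / δd⌋ = 0 :=
        Int.floor_eq_zero_iff.mpr ⟨div_nonneg hs.1 hδdpos.le, (div_lt_one hδdpos).2 h⟩
      rw [hxdef]; simp only []
      rw [hfl]
      norm_num
    · rw [hxdef]; simp only []
      rw [h, div_self (ne_of_gt hδdpos), Int.floor_one]
      have hz : δd - (1:ℤ) * δd = 0 := by push_cast; ring
      rw [hz, hY0, hYδ]
  have hper : ∀ t, x (t + δd) = x t := by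
    intro t
    have h1 : (t + δd)/δd = t/δd + 1 := by field_simp
    rw [hxdef]; simp only []
    rw [h1, Int.floor_add_one]
    congr 1
    push_cast
    ring
  have hperiodic : Function.Periodic x δd := hper
  have hcover : ∀ m : ℤ, ContinuousOn x (Icc ((m:ℝ)*δd) (((m:ℝ)+1)*δd)) := by
    intro m
    have heq : ∀ t ∈ Icc ((m:ℝ)*δd) (((m:ℝ)+1)*δd), x t = Y (t - (m:ℝ)*δd) := by
      intro t ht
      have hexp : ((m:ℝ)+1)*δd = (m:ℝ)*δd + δd := by ring
      have hmem : t - (m:ℝ)*δd ∈ Icc (0:ℝ) δd :=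
        ⟨by linarith [ht.1], by rw [hexp] at ht; linarith [ht.2]⟩
      have hperm : x (t - (m:ℝ)*δd) = x t := hperiodic.sub_int_mul_eq m
      rw [← hperm, hxY _ hmem]
    have hmapsto : MapsTo (fun t : ℝ => t - (m:ℝ)*δd)
        (Icc ((m:ℝ)*δd) (((m:ℝ)+1)*δd)) (Icc (0:ℝ) δd) := by
      intro t ht
      have hexp : ((m:ℝ)+1)*δd = (m:ℝ)*δd + δd := by ring
      have h2' : t ≤ (m:ℝ)*δd + δd := by rw [← hexp]; exact ht.2
      exact ⟨by show (0:ℝ) ≤ t - (m:ℝ)*δd; linarith only [ht.1],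
        by show t - (m:ℝ)*δd ≤ δd; linarith only [h2']⟩
    exact ContinuousOn.congr
      (ContinuousOn.comp hYcont ((continuous_id.sub continuous_const).continuousOn) hmapsto)
      heq
  have hxcont : Continuous x := by
    rw [continuous_iff_continuousAt]
    intro t₀
    set m : ℤ := ⌊t₀/δd⌋ with hmdef
    have h1 : (m:ℝ)*δd ≤ t₀ := by
      have := (hfract t₀).1
      rw [← hmdef] at this
      linarith
    have h2 : t₀ < ((m:ℝ)+1)*δd := by
      have := (hfract t₀).2
      rw [← hmdef] at this
      have hexp : ((m:ℝ)+1)*δd = (m:ℝ)*δd + δd := by ring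
      rw [hexp]
      linarith only [this]
    rw [continuousAt_iff_continuous_left_right]
    constructor
    · by_cases hc : (m:ℝ)*δd < t₀
      · exact ((hcover m) t₀ ⟨h1, h2.le⟩).mono_of_mem_nhdsWithin
          (Icc_mem_nhdsLE_of_mem ⟨hc, h2.le⟩)
      · have ht₀ : t₀ = (m:ℝ)*δd := le_antisymm (not_lt.mp hc) h1
        have hexp : ((m:ℝ)-1)*δd = (m:ℝ)*δd - δd := by ring
        have hlt : ((m:ℝ)-1)*δd < t₀ := by rw [ht₀, hexp]; linarith
        have hcov := hcover (m - 1)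
        rw [show ((m - 1 : ℤ):ℝ) = (m:ℝ) - 1 by push_cast; ring] at hcov
        rw [show ((m:ℝ) - 1 + 1) = (m:ℝ) by ring] at hcov
        exact (hcov t₀ ⟨hlt.le, le_of_eq ht₀⟩).mono_of_mem_nhdsWithin
          (Icc_mem_nhdsLE_of_mem ⟨hlt, le_of_eq ht₀⟩)
    · exact ((hcover m) t₀ ⟨h1, h2.le⟩).mono_of_mem_nhdsWithin
        (Icc_mem_nhdsGE_of_mem ⟨h1, h2⟩)
  -- derivative clauses
  have hsubκ : Icc (0:ℝ) T₁ ⊆ Icc (0:ℝ) δd :=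
    Icc_subset_Icc le_rfl (by rw [hδddef]; linarith)
  have hxeqΦ : ∀ s ∈ Icc (0:ℝ) T₁, x s = Φ y s := fun s hs => by
    rw [hxY s (hsubκ hs), hYκ s hs]
  have hderiv₁ : ∀ t ∈ Icc (0:ℝ) T₁, HasDerivWithinAt x (f₁ (x t)) (Icc (0:ℝ) T₁) t := by
    intro t ht
    have hd := hΦd y t ht
    have hmem1 : Φ y t ∈ closedBall x₀ 1 := by
      have := hball1 t (hsubκ ht)
      rwa [hYκ t ht] at this
    have hval : f₁ (x t) = F₁ (Φ y t) := by
      rw [hxeqΦ t ht, hF₁eq _ hmem1]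
    rw [hval]
    exact hd.congr hxeqΦ (hxeqΦ t ht)
  have hsubδ : Icc T₁ δd ⊆ Icc (0:ℝ) δd := Icc_subset_Icc hT₁pos.le le_rfl
  have hxeqΨ : ∀ s ∈ Icc T₁ δd, x s = Ψ y' (s - T₁) := fun s hs => by
    rw [hxY s (hsubδ hs), hYright s hs]
  have hderiv₂ : ∀ t ∈ Icc T₁ δd, HasDerivWithinAt x (f₂ (x t)) (Icc T₁ δd) t := by
    intro t ht
    have ht2 : t ≤ T₁ + T₂ := by rw [← hδddef]; exact ht.2
    have hmemt : t - T₁ ∈ Icc (0:ℝ) T₂ := ⟨by linarith [ht.1], by linarith⟩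
    have hd := hΨd y' (t - T₁) hmemt
    have hinner : HasDerivWithinAt (fun s : ℝ => s - T₁) 1 (Icc T₁ δd) t :=
      ((hasDerivAt_id t).sub_const T₁).hasDerivWithinAt
    have hmapsto : MapsTo (fun s : ℝ => s - T₁) (Icc T₁ δd) (Icc (0:ℝ) T₂) := by
      intro s hs
      have hs2 : s ≤ T₁ + T₂ := by rw [← hδddef]; exact hs.2
      exact ⟨by show (0:ℝ) ≤ s - T₁; linarith only [hs.1],
        by show s - T₁ ≤ T₂; linarith only [hs2]⟩
    have hcomp := HasDerivWithinAt.scomp t hd hinner hmapsto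
    rw [one_smul] at hcomp
    have hmem1 : Ψ y' (t - T₁) ∈ closedBall x₀ 1 := by
      have := hball1 t (hsubδ ht)
      rwa [hYright t ht] at this
    have hval : f₂ (x t) = F₂ (Ψ y' (t - T₁)) := by
      rw [hxeqΨ t ht, hF₂eq _ hmem1]
    rw [hval]
    exact hcomp.congr hxeqΨ (hxeqΨ t ht)
  -- conclusion
  refine ⟨T₁, δd, x, hT₁pos, hκδ, hxcont, hper, hderiv₁, hderiv₂, ?_⟩
  intro t
  have hfr := hfract t
  have hbd := hYbd _ (Ico_subset_Icc_self hfr)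
  have hx : x t = Y (t - ⌊t/δd⌋ * δd) := rfl
  calc ‖x t - x₀‖ = ‖Y (t - ⌊t/δd⌋ * δd) - x₀‖ := by rw [hx]
    _ ≤ r + r/2 := hbd
    _ < ε := by linarith

end TwoCycleAux




/-- **Main theorem: two-cycles near non-degenerate stasis points.**
Let `f₁, f₂ : ℝⁿ → ℝⁿ` be `C²` vector fields, `x₀` a stasis point with
`k₁ • f₁ x₀ + k₂ • f₂ x₀ = 0`, `k₁, k₂ > 0`, and suppose the derivative of
`x ↦ k₁ • f₁ x + k₂ • f₂ x` at `x₀` is non-singular.  Then for every `ε > 0`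
the inclusion `x' ∈ {f₁ x, f₂ x}` has a two-cycle in the `ε`-ball around `x₀`:
a continuous `δ`-periodic `x : ℝ → ℝⁿ`, `0 < κ < δ`, following `f₁` on `[0, κ]`
and `f₂` on `[κ, δ]` (one-sided derivatives at the switching times), with
`‖x t - x₀‖ < ε` for all `t`. -/
theorem two_cycles_near_stasis_points
    (n : ℕ) (f₁ f₂ : EuclideanSpace ℝ (Fin n) → EuclideanSpace ℝ (Fin n))
    (hf₁ : ContDiff ℝ 2 f₁) (hf₂ : ContDiff ℝ 2 f₂)
    (x₀ : EuclideanSpace ℝ (Fin n)) (k₁ k₂ : ℝ) (hk₁ : 0 < k₁) (hk₂ : 0 < k₂)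
    (hstasis : k₁ • f₁ x₀ + k₂ • f₂ x₀ = 0)
    (hns : Function.Bijective
      ⇑(fderiv ℝ (fun x => k₁ • f₁ x + k₂ • f₂ x) x₀)) :
    ∀ ε > 0, ∃ (κ δ : ℝ) (x : ℝ → EuclideanSpace ℝ (Fin n)),
      0 < κ ∧ κ < δ ∧ Continuous x ∧
      (∀ t, x (t + δ) = x t) ∧
      (∀ t ∈ Set.Icc (0 : ℝ) κ,
        HasDerivWithinAt x (f₁ (x t)) (Set.Icc (0 : ℝ) κ) t) ∧
      (∀ t ∈ Set.Icc κ δ,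
        HasDerivWithinAt x (f₂ (x t)) (Set.Icc κ δ) t) ∧
      (∀ t, ‖x t - x₀‖ < ε) :=
  TwoCycleAux.main_aux f₁ f₂ hf₁ hf₂ x₀ k₁ k₂ hk₁ hk₂ hstasis hns
end

section
/- Let g : ℝⁿ → ℝⁿ be a C² vector field with g(0) = −c·e₁ for some c > 0, where e₁ = (1, 0, …, 0), and suppose the total derivative Dg(0) : ℝⁿ → ℝⁿ is non-singular. Then for every ε > 0 the differential inclusion x′ ∈ {e₁, g(x)} has a two-cycle contained in the ε-ball around the origin: there exist 0 < κ < δ and a continuous δ-periodic function x : ℝ → ℝⁿ with x′(t) = e₁ for t ∈ (0, κ), x′(t) = g(x(t)) for t ∈ (κ, δ) (with matching one-sided derivatives at the switching times), and ‖x(t)‖ < ε for all t. -/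
open Set MeasureTheory intervalIntegral Metric

variable {E : Type*} [NormedAddCommGroup E] [NormedSpace ℝ E] [CompleteSpace E]

/-- Core fixed-point construction: a `g`-trajectory arc on `[0, κ/c]` whose endpoints
differ by `κ • e`, staying in the `κ`-ball. -/
theorem exists_cycle_arc (g : E → E) (hgc : Continuous g) (A : E ≃L[ℝ] E) (e : E)
    (he : ‖e‖ = 1)
    (c : ℝ) (hc : 0 < c) (hg0 : g 0 = (-c) • e) (M r₀ : ℝ) (hM : 0 ≤ M) (hr₀ : 0 < r₀)
    (hTay : ∀ ρ : ℝ, 0 ≤ ρ → ρ ≤ r₀ → ∀ u ∈ closedBall (0:E) ρ, ∀ v ∈ closedBall (0:E) ρ,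
      ‖g u - g v - A (u - v)‖ ≤ M * ρ * ‖u - v‖)
    (κ : ℝ) (hκ0 : 0 < κ) (hκr : κ ≤ r₀)
    (hq : κ * (‖(A.symm : E →L[ℝ] E)‖ * M
        + 2 * (‖(A : E →L[ℝ] E)‖ + M * r₀) / c) ≤ 1/2) :
    ∃ Y : ℝ → E, Continuous Y ∧ (∀ t ∈ Icc 0 (κ/c), HasDerivAt Y (g (Y t)) t) ∧
      Y (κ/c) = Y 0 - κ • e ∧ (∀ t ∈ Icc 0 (κ/c), ‖Y t‖ ≤ κ) := by
  set AB := ‖(A.symm : E →L[ℝ] E)‖ with hAB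
  set L := ‖(A : E →L[ℝ] E)‖ + M * r₀ with hL
  have hL0 : 0 ≤ L := add_nonneg (norm_nonneg _) (mul_nonneg hM hr₀.le)
  set q₀ := AB * M + 2 * L / c with hq₀
  have hq₀0 : 0 ≤ q₀ := add_nonneg (mul_nonneg (norm_nonneg _) hM)
    (div_nonneg (by positivity) hc.le)
  set τ := κ / c with hτ
  have hτ0 : 0 < τ := div_pos hκ0 hc
  have hτle : (0:ℝ) ≤ τ := hτ0.le
  have hτc : τ * c = κ := div_mul_cancel₀ κ hc.ne'
  haveI : CompactSpace ↥(Icc (0:ℝ) τ) := isCompact_iff_compactSpace.mp isCompact_Icc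
  -- the space of candidate arcs
  set Z := C(↥(Icc (0:ℝ) τ), E) with hZ
  -- clamped extension to ℝ
  let ext : Z → ℝ → E := fun y s => y (projIcc 0 τ hτle s)
  have hext_cont : ∀ y : Z, Continuous (ext y) := fun y =>
    y.continuous.comp continuous_projIcc
  have hext_eq : ∀ (y : Z) {s : ℝ} (hs : s ∈ Icc (0:ℝ) τ), ext y s = y ⟨s, hs⟩ := by
    intro y s hs; exact congrArg y (projIcc_of_mem hτle hs)
  have hext_sub : ∀ (y z : Z) (s : ℝ), ‖ext y s - ext z s‖ ≤ dist y z := by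
    intro y z s
    rw [← dist_eq_norm]
    exact ContinuousMap.dist_apply_le_dist _
  have hext_norm : ∀ (y : Z) (s : ℝ), ‖ext y s‖ ≤ dist y 0 := by
    intro y s
    have h := hext_sub y 0 s
    have h0 : (0 : Z) (projIcc 0 τ hτle s) = 0 := rfl
    simp only [ext] at h ⊢
    rwa [h0, sub_zero] at h
  -- primitive of g along the (extended) arc
  let G : Z → ℝ → E := fun y t => ∫ s in (0:ℝ)..t, g (ext y s)
  have hgyc : ∀ y : Z, Continuous fun s => g (ext y s) := fun y => hgc.comp (hext_cont y)
  have hG_cont : ∀ y : Z, Continuous (G y) := fun y =>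
    intervalIntegral.continuous_primitive (fun a b => ((hgyc y).intervalIntegrable a b)) 0
  -- the affine correction constant
  let K : Z → E := fun y =>
    τ⁻¹ • ((∫ s in (0:ℝ)..τ, ext y s) - ∫ s in (0:ℝ)..τ, G y s)
      - A.symm ((τ⁻¹ • ∫ s in (0:ℝ)..τ, g (ext y s)) + c • e)
  -- the operator
  let T : Z → Z := fun y =>
    ⟨fun t => K y + G y t.1, continuous_const.add ((hG_cont y).comp continuous_subtype_val)⟩
  have hT_apply : ∀ (y : Z) (t : ↥(Icc (0:ℝ) τ)), T y t = K y + G y t.1 := fun y t => rfl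
  -- contraction estimate
  have key : ∀ y ∈ closedBall (0:Z) κ, ∀ z ∈ closedBall (0:Z) κ,
      dist (T y) (T z) ≤ (κ * q₀) * dist y z := by
    intro y hy z hz
    set d := dist y z with hd
    have hd0 : 0 ≤ d := dist_nonneg
    have hyκ : ∀ s, ‖ext y s‖ ≤ κ := fun s => (hext_norm y s).trans (mem_closedBall.mp hy)
    have hzκ : ∀ s, ‖ext z s‖ ≤ κ := fun s => (hext_norm z s).trans (mem_closedBall.mp hz)
    have hwd : ∀ s, ‖ext y s - ext z s‖ ≤ d := fun s => hext_sub y z s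
    have hPtay : ∀ s, ‖g (ext y s) - g (ext z s) - A (ext y s - ext z s)‖ ≤ M * κ * d := by
      intro s
      refine (hTay κ hκ0.le hκr _ (mem_closedBall_zero_iff.2 (hyκ s)) _
        (mem_closedBall_zero_iff.2 (hzκ s))).trans ?_
      exact mul_le_mul_of_nonneg_left (hwd s) (by positivity)
    have hPlip : ∀ s, ‖g (ext y s) - g (ext z s)‖ ≤ L * d := by
      intro s
      have h1 : g (ext y s) - g (ext z s)
          = (g (ext y s) - g (ext z s) - A (ext y s - ext z s)) + A (ext y s - ext z s) := by
        abel
      rw [h1]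
      have h2 : ‖g (ext y s) - g (ext z s) - A (ext y s - ext z s)‖ ≤ M * r₀ * d := by
        refine (hTay r₀ hr₀.le le_rfl _ (mem_closedBall_zero_iff.2 ((hyκ s).trans hκr)) _
          (mem_closedBall_zero_iff.2 ((hzκ s).trans hκr))).trans ?_
        exact mul_le_mul_of_nonneg_left (hwd s) (by positivity)
      have h3 : ‖A (ext y s - ext z s)‖ ≤ ‖(A : E →L[ℝ] E)‖ * d := by
        refine ((A : E →L[ℝ] E).le_opNorm _).trans ?_
        exact mul_le_mul_of_nonneg_left (hwd s) (norm_nonneg _)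
      calc ‖_ + _‖ ≤ M * r₀ * d + ‖(A : E →L[ℝ] E)‖ * d := (norm_add_le _ _).trans (add_le_add h2 h3)
        _ = L * d := by rw [hL]; ring
    have hPG : ∀ t ∈ Icc (0:ℝ) τ, ‖G y t - G z t‖ ≤ L * d * τ := by
      intro t ht
      have hsub : G y t - G z t = ∫ s in (0:ℝ)..t, (g (ext y s) - g (ext z s)) :=
        (integral_sub ((hgyc y).intervalIntegrable _ _) ((hgyc z).intervalIntegrable _ _)).symm
      rw [hsub]
      refine (intervalIntegral.norm_integral_le_of_norm_le_const (C := L * d)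
        (fun s _ => hPlip s)).trans ?_
      rw [abs_of_nonneg (by simpa using ht.1)]
      simp only [sub_zero]
      exact mul_le_mul_of_nonneg_left ht.2 (by positivity)
    -- integrability facts
    have hw_int : IntervalIntegrable (fun s => ext y s - ext z s) volume 0 τ :=
      ((hext_cont y).sub (hext_cont z)).intervalIntegrable _ _
    have hgy_int : IntervalIntegrable (fun s => g (ext y s)) volume 0 τ :=
      (hgyc y).intervalIntegrable _ _
    have hgz_int : IntervalIntegrable (fun s => g (ext z s)) volume 0 τ :=
      (hgyc z).intervalIntegrable _ _
    have hAw_int : IntervalIntegrable (fun s => A (ext y s - ext z s)) volume 0 τ :=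
      ((A.continuous.comp ((hext_cont y).sub (hext_cont z))).intervalIntegrable _ _)
    have hΔg_int : IntervalIntegrable (fun s => g (ext y s) - g (ext z s)) volume 0 τ :=
      ((hgyc y).sub (hgyc z)).intervalIntegrable _ _
    have hGy_int : IntervalIntegrable (G y) volume 0 τ := (hG_cont y).intervalIntegrable _ _
    have hGz_int : IntervalIntegrable (G z) volume 0 τ := (hG_cont z).intervalIntegrable _ _
    -- the key algebraic identity
    have hAint : (∫ s in (0:ℝ)..τ, A (ext y s - ext z s))
        = A ((∫ s in (0:ℝ)..τ, ext y s) - ∫ s in (0:ℝ)..τ, ext z s) := by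
      rw [← integral_sub ((hext_cont y).intervalIntegrable _ _) ((hext_cont z).intervalIntegrable _ _)]
      exact (A : E →L[ℝ] E).intervalIntegral_comp_comm hw_int
    have hid : K y - K z
        = A.symm (τ⁻¹ • ∫ s in (0:ℝ)..τ,
            (A (ext y s - ext z s) - (g (ext y s) - g (ext z s))))
          - τ⁻¹ • ∫ s in (0:ℝ)..τ, (G y s - G z s) := by
      rw [integral_sub hAw_int hΔg_int, integral_sub hgy_int hgz_int,
        integral_sub hGy_int hGz_int, hAint]
      simp only [K, map_sub, map_add, _root_.map_smul, smul_sub, smul_add,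
        ContinuousLinearEquiv.symm_apply_apply]
      module
    -- final estimate
    rw [ContinuousMap.dist_le (by positivity)]
    intro t
    rw [hT_apply, hT_apply, dist_eq_norm]
    have hsplit : K y + G y t.1 - (K z + G z t.1) = (K y - K z) + (G y t.1 - G z t.1) := by abel
    rw [hsplit, hid]
    have b1 : ‖A.symm (τ⁻¹ • ∫ s in (0:ℝ)..τ,
        (A (ext y s - ext z s) - (g (ext y s) - g (ext z s))))‖ ≤ AB * M * κ * d := by
      refine ((A.symm : E →L[ℝ] E).le_opNorm _).trans ?_
      rw [norm_smul, Real.norm_eq_abs, abs_of_pos (inv_pos.2 hτ0)]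
      have hb : ‖∫ s in (0:ℝ)..τ, (A (ext y s - ext z s) - (g (ext y s) - g (ext z s)))‖
          ≤ M * κ * d * τ := by
        refine (intervalIntegral.norm_integral_le_of_norm_le_const (C := M * κ * d)
          (fun s _ => ?_)).trans (by rw [sub_zero, abs_of_nonneg hτle])
        rw [← norm_neg]
        simpa [neg_sub] using hPtay s
      calc ‖(A.symm : E →L[ℝ] E)‖ * (τ⁻¹ * ‖_‖) ≤ AB * (τ⁻¹ * (M * κ * d * τ)) := by
            rw [← hAB]; gcongr
        _ = AB * M * κ * d := by field_simp
    have b2 : ‖τ⁻¹ • ∫ s in (0:ℝ)..τ, (G y s - G z s)‖ ≤ L * d * τ := by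
      rw [norm_smul, Real.norm_eq_abs, abs_of_pos (inv_pos.2 hτ0)]
      have hb : ‖∫ s in (0:ℝ)..τ, (G y s - G z s)‖ ≤ (L * d * τ) * τ := by
        refine (intervalIntegral.norm_integral_le_of_norm_le_const (C := L * d * τ)
          (fun s hs => ?_)).trans (by rw [sub_zero, abs_of_nonneg hτle])
        rw [uIoc_of_le hτle] at hs
        exact hPG s ⟨hs.1.le, hs.2⟩
      calc τ⁻¹ * ‖_‖ ≤ τ⁻¹ * ((L * d * τ) * τ) := by gcongr
        _ = L * d * τ := by field_simp
    have b3 : ‖G y t.1 - G z t.1‖ ≤ L * d * τ := hPG t.1 t.2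
    have htotal : AB * M * κ * d + (L * d * τ + L * d * τ) = (κ * q₀) * d := by
      rw [hq₀, hτ]; field_simp; ring
    calc ‖_ - _ + _‖ ≤ ‖A.symm (τ⁻¹ • ∫ s in (0:ℝ)..τ,
            (A (ext y s - ext z s) - (g (ext y s) - g (ext z s))))‖
          + ‖τ⁻¹ • ∫ s in (0:ℝ)..τ, (G y s - G z s)‖ + ‖G y t.1 - G z t.1‖ := by
          refine (norm_add_le _ _).trans ?_
          gcongr
          exact norm_sub_le _ _
      _ ≤ AB * M * κ * d + L * d * τ + L * d * τ := by gcongr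
      _ = (κ * q₀) * d := by rw [← htotal]; ring
  -- value at zero
  have hT0 : dist (T 0) 0 ≤ κ / 2 := by
    have hext0 : ∀ s : ℝ, ext (0:Z) s = 0 := fun s => rfl
    have hGz : ∀ t : ℝ, G (0:Z) t = t • ((-c) • e) := by
      intro t
      have : (∫ s in (0:ℝ)..t, g (ext (0:Z) s)) = ∫ s in (0:ℝ)..t, ((-c) • e) := by
        refine integral_congr fun s _ => ?_
        rw [hext0, hg0]
      simp only [G]
      rw [this, intervalIntegral.integral_const, sub_zero]
    have hK0 : K (0:Z) = (τ * c / 2) • e := by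
      have h1 : (∫ s in (0:ℝ)..τ, ext (0:Z) s) = 0 := by
        simp [hext0]
      have h2 : (∫ s in (0:ℝ)..τ, g (ext (0:Z) s)) = τ • ((-c) • e) := by
        have := hGz τ
        simpa [G] using this
      have h3 : (∫ s in (0:ℝ)..τ, G (0:Z) s) = (τ^2/2) • ((-c) • e) := by
        rw [integral_congr (g := fun s => s • ((-c) • e)) (fun s _ => hGz s),
          intervalIntegral.integral_smul_const, integral_id]
        norm_num
      have hsymmarg : (τ⁻¹ • (τ • ((-c) • e))) + c • e = 0 := by
        rw [smul_smul, inv_mul_cancel₀ hτ0.ne', one_smul, ← add_smul]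
        simp
      simp only [K]
      rw [h1, h2, h3, hsymmarg, map_zero, sub_zero, zero_sub, smul_neg, smul_smul,
        smul_smul, ← neg_smul]
      congr 1
      field_simp
    rw [ContinuousMap.dist_le (by positivity)]
    intro t
    have hzap : (0:Z) t = 0 := rfl
    rw [hT_apply, hzap, dist_eq_norm, sub_zero, hK0, hGz, smul_smul, ← add_smul, norm_smul]
    have hbound : |τ * c / 2 + t.1 * (-c)| ≤ κ / 2 := by
      rw [abs_le]
      have ht1 : 0 ≤ t.1 * c := mul_nonneg t.2.1 hc.le
      have ht2 : t.1 * c ≤ τ * c := mul_le_mul_of_nonneg_right t.2.2 hc.le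
      rw [hτc] at ht2 ⊢
      constructor <;> nlinarith
    calc |τ * c / 2 + t.1 * (-c)| * ‖e‖ ≤ (κ/2) * 1 := by
          refine mul_le_mul hbound ?_ (norm_nonneg _) (by positivity)
          rw [he]
      _ = κ / 2 := by ring
  -- invariance of the ball
  have hinv : ∀ y ∈ closedBall (0:Z) κ, T y ∈ closedBall (0:Z) κ := by
    intro y hy
    rw [mem_closedBall] at hy ⊢
    calc dist (T y) 0 ≤ dist (T y) (T 0) + dist (T 0) 0 := dist_triangle _ _ _
      _ ≤ (κ * q₀) * dist y 0 + κ/2 := by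
          gcongr
          exact key y (mem_closedBall.2 hy) 0 (mem_closedBall_self hκ0.le)
      _ ≤ (1/2) * κ + κ/2 := by
          have : (κ * q₀) * dist y 0 ≤ (1/2) * κ :=
            mul_le_mul hq (by simpa using hy) dist_nonneg (by norm_num)
          linarith
      _ = κ := by ring
  -- Banach fixed point
  haveI : Nonempty (closedBall (0:Z) κ) := ⟨⟨0, mem_closedBall_self hκ0.le⟩⟩
  haveI : CompleteSpace (closedBall (0:Z) κ) :=
    IsClosed.completeSpace_coe (hs := Metric.isClosed_closedBall)
  let S : closedBall (0:Z) κ → closedBall (0:Z) κ := fun y => ⟨T y, hinv y y.2⟩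
  have hcontr : ContractingWith (1/2 : NNReal) S := by
    constructor
    · rw [← NNReal.coe_lt_coe]; norm_num
    · apply LipschitzWith.of_dist_le_mul
      intro y z
      rw [Subtype.dist_eq, Subtype.dist_eq]
      refine (key y y.2 z z.2).trans ?_
      have hco : ((1/2 : NNReal) : ℝ) = 1/2 := by norm_num
      rw [hco]
      exact mul_le_mul_of_nonneg_right hq dist_nonneg
  set p₀ := ContractingWith.fixedPoint S hcontr with hp₀
  have hfix : S p₀ = p₀ := hcontr.fixedPoint_isFixedPt
  have hTfix : T ↑p₀ = ↑p₀ := congrArg Subtype.val hfix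
  set w : Z := ↑p₀ with hw
  have hwmem : dist w (0:Z) ≤ κ := mem_closedBall.mp p₀.2
  have hYval : ∀ {t : ℝ} (ht : t ∈ Icc (0:ℝ) τ), K w + G w t = ext w t := by
    intro t ht
    have h := congrFun (congrArg DFunLike.coe hTfix) ⟨t, ht⟩
    rw [hT_apply] at h
    rw [hext_eq w ht]
    exact h
  -- the constraint
  have hconstraint : (∫ s in (0:ℝ)..τ, g (ext w s)) = (-κ) • e := by
    have hIcc : uIcc (0:ℝ) τ = Icc 0 τ := uIcc_of_le hτle
    have hIntEq : ∫ t in (0:ℝ)..τ, (K w + G w t) = ∫ t in (0:ℝ)..τ, ext w t := by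
      refine integral_congr ?_
      rw [hIcc]
      intro s hs
      exact hYval hs
    have hlhs : ∫ t in (0:ℝ)..τ, (K w + G w t)
        = τ • K w + ∫ t in (0:ℝ)..τ, G w t := by
      rw [integral_add intervalIntegrable_const ((hG_cont w).intervalIntegrable _ _),
        intervalIntegral.integral_const, sub_zero]
    have hexp : τ • K w = ((∫ s in (0:ℝ)..τ, ext w s) - ∫ s in (0:ℝ)..τ, G w s)
        - τ • A.symm ((τ⁻¹ • ∫ s in (0:ℝ)..τ, g (ext w s)) + c • e) := by
      simp only [K, smul_sub, smul_smul, mul_inv_cancel₀ hτ0.ne', one_smul]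
    have h0 : τ • A.symm ((τ⁻¹ • ∫ s in (0:ℝ)..τ, g (ext w s)) + c • e) = 0 := by
      have h := hIntEq
      rw [hlhs, hexp] at h
      have h' : (∫ s in (0:ℝ)..τ, ext w s)
          - τ • A.symm ((τ⁻¹ • ∫ s in (0:ℝ)..τ, g (ext w s)) + c • e)
          = ∫ s in (0:ℝ)..τ, ext w s := by
        calc (∫ s in (0:ℝ)..τ, ext w s)
            - τ • A.symm ((τ⁻¹ • ∫ s in (0:ℝ)..τ, g (ext w s)) + c • e)
            = ((∫ s in (0:ℝ)..τ, ext w s) - ∫ s in (0:ℝ)..τ, G w s)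
              - τ • A.symm ((τ⁻¹ • ∫ s in (0:ℝ)..τ, g (ext w s)) + c • e)
              + ∫ s in (0:ℝ)..τ, G w s := by abel
          _ = ∫ s in (0:ℝ)..τ, ext w s := h
      exact sub_eq_self.mp h'
    have h1 : A.symm ((τ⁻¹ • ∫ s in (0:ℝ)..τ, g (ext w s)) + c • e) = 0 := by
      rcases smul_eq_zero.mp h0 with h | h
      · exact absurd h hτ0.ne'
      · exact h
    have h2 : (τ⁻¹ • ∫ s in (0:ℝ)..τ, g (ext w s)) + c • e = 0 :=
      (ContinuousLinearEquiv.map_eq_zero_iff A.symm).mp h1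
    have h3 : τ⁻¹ • (∫ s in (0:ℝ)..τ, g (ext w s)) = -(c • e) :=
      eq_neg_of_add_eq_zero_left h2
    have h4 := congrArg (fun v => τ • v) h3
    simp only [smul_smul, mul_inv_cancel₀ hτ0.ne', one_smul] at h4
    rw [h4, smul_neg, smul_smul, hτc, ← neg_smul]
  refine ⟨fun t => K w + G w t, continuous_const.add (hG_cont w), ?_, ?_, ?_⟩
  · intro t ht
    have hder : HasDerivAt (fun u => ∫ s in (0:ℝ)..u, g (ext w s)) (g (ext w t)) t :=
      integral_hasDerivAt_right ((hgyc w).intervalIntegrable _ _)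
        ((hgyc w).stronglyMeasurable.stronglyMeasurableAtFilter)
        ((hgyc w).continuousAt)
    have h2 := hder.const_add (K w)
    have h3 : g (ext w t) = g (K w + G w t) := by rw [hYval ht]
    exact h3 ▸ h2
  · show K w + G w τ = K w + G w 0 - κ • e
    have hGτ : G w τ = (-κ) • e := hconstraint
    have hG0 : G w 0 = 0 := integral_same
    rw [hGτ, hG0, add_zero, neg_smul, ← sub_eq_add_neg]
  · intro t ht
    show ‖K w + G w t‖ ≤ κ
    rw [hYval ht]
    exact (hext_norm w t).trans hwmem


/-- **Rectified normal form of the main theorem.**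
Let `g : ℝⁿ → ℝⁿ` be a `C²` vector field with `g 0 = -c • e₁` for some `c > 0`
and with `Dg 0` non-singular.  Then for every `ε > 0` the inclusion
`x' ∈ {e₁, g x}` has a two-cycle in the `ε`-ball around the origin: a continuous
`δ`-periodic `x : ℝ → ℝⁿ`, `0 < κ < δ`, following the constant field `e₁` on
`[0, κ]` and `g` on `[κ, δ]` (one-sided derivatives at the switching times),
with `‖x t‖ < ε` for all `t`. -/
theorem two_cycles_rectified_normal_form
    (n : ℕ) [NeZero n]
    (g : EuclideanSpace ℝ (Fin n) → EuclideanSpace ℝ (Fin n))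
    (hg : ContDiff ℝ 2 g) (c : ℝ) (hc : 0 < c)
    (hg0 : g 0 = (-c) • EuclideanSpace.single (0 : Fin n) (1 : ℝ))
    (hns : Function.Bijective ⇑(fderiv ℝ g 0)) :
    ∀ ε > 0, ∃ (κ δ : ℝ) (x : ℝ → EuclideanSpace ℝ (Fin n)),
      0 < κ ∧ κ < δ ∧ Continuous x ∧
      (∀ t, x (t + δ) = x t) ∧
      (∀ t ∈ Set.Icc (0 : ℝ) κ,
        HasDerivWithinAt x (EuclideanSpace.single (0 : Fin n) (1 : ℝ))
          (Set.Icc (0 : ℝ) κ) t) ∧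
      (∀ t ∈ Set.Icc κ δ,
        HasDerivWithinAt x (g (x t)) (Set.Icc κ δ) t) ∧
      (∀ t, ‖x t‖ < ε) := by
  intro ε hε
  let E := EuclideanSpace ℝ (Fin n)
  let e : E := EuclideanSpace.single (0 : Fin n) (1 : ℝ)
  have he : ‖e‖ = 1 := by rw [EuclideanSpace.norm_single]; norm_num
  let A₀ : E →L[ℝ] E := fderiv ℝ g 0
  let Aeq : E ≃L[ℝ] E :=
    LinearEquiv.toContinuousLinearEquiv (LinearEquiv.ofBijective (A₀ : E →ₗ[ℝ] E)
      (by rwa [ContinuousLinearMap.coe_coe]))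
  have hAeq : ∀ v : E, Aeq v = A₀ v := fun v => rfl
  -- Lipschitz bound on the derivative near 0
  have hg1 : ContDiff ℝ 1 (fderiv ℝ g) := hg.fderiv_right (by norm_num)
  obtain ⟨M, s, hs, hM⟩ := (hg1.contDiffAt (x := 0)).exists_lipschitzOnWith
  obtain ⟨r, hr0, hrs⟩ := Metric.mem_nhds_iff.mp hs
  set r₀ := r / 2 with hr₀def
  have hr₀0 : 0 < r₀ := by positivity
  have hball : closedBall (0:E) r₀ ⊆ s :=
    (closedBall_subset_ball (by rw [hr₀def]; linarith)).trans hrs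
  have hTay : ∀ ρ : ℝ, 0 ≤ ρ → ρ ≤ r₀ → ∀ u ∈ closedBall (0:E) ρ, ∀ v ∈ closedBall (0:E) ρ,
      ‖g u - g v - Aeq (u - v)‖ ≤ (M:ℝ) * ρ * ‖u - v‖ := by
    intro ρ hρ0 hρr u hu v hv
    have hconv : Convex ℝ (closedBall (0:E) ρ) := convex_closedBall _ _
    have hderiv : ∀ x ∈ closedBall (0:E) ρ,
        HasFDerivWithinAt (fun x => g x - A₀ x) (fderiv ℝ g x - A₀) (closedBall (0:E) ρ) x := by
      intro x hx
      exact (((hg.differentiable (by norm_num)).differentiableAt.hasFDerivAt).sub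
        (A₀.hasFDerivAt)).hasFDerivWithinAt
    have hbound : ∀ x ∈ closedBall (0:E) ρ, ‖fderiv ℝ g x - A₀‖ ≤ (M:ℝ) * ρ := by
      intro x hx
      have hx' : x ∈ s := hball (closedBall_subset_closedBall hρr hx)
      have h0' : (0:E) ∈ s := hball (mem_closedBall_self hr₀0.le)
      have hd := hM.dist_le_mul x hx' 0 h0'
      rw [dist_eq_norm, dist_eq_norm, sub_zero] at hd
      refine hd.trans ?_
      have hxρ : ‖x‖ ≤ ρ := mem_closedBall_zero_iff.mp hx
      exact mul_le_mul_of_nonneg_left hxρ M.coe_nonneg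
    have hmain := hconv.norm_image_sub_le_of_norm_hasFDerivWithin_le hderiv hbound hv hu
    have hrw : g u - A₀ u - (g v - A₀ v) = g u - g v - Aeq (u - v) := by
      rw [hAeq, map_sub]
      abel
    rwa [hrw] at hmain
  -- choose κ
  set q₀ : ℝ := ‖(Aeq.symm : E →L[ℝ] E)‖ * (M:ℝ) + 2 * (‖(Aeq : E →L[ℝ] E)‖ + (M:ℝ) * r₀) / c
    with hq₀def
  have hq₀0 : 0 ≤ q₀ := by
    rw [hq₀def]
    have h1 : (0:ℝ) ≤ ‖(Aeq.symm : E →L[ℝ] E)‖ * (M:ℝ) :=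
      mul_nonneg (norm_nonneg _) M.coe_nonneg
    have h2 : (0:ℝ) ≤ 2 * (‖(Aeq : E →L[ℝ] E)‖ + (M:ℝ) * r₀) / c := by
      apply div_nonneg _ hc.le
      have := mul_nonneg M.coe_nonneg hr₀0.le
      have := norm_nonneg (Aeq : E →L[ℝ] E)
      linarith
    linarith
  set κ : ℝ := min (min r₀ (ε/3)) (1/(2*(q₀+1))) with hκdef
  have hκ0 : 0 < κ := by
    apply lt_min (lt_min hr₀0 (by positivity))
    positivity
  have hκr : κ ≤ r₀ := (min_le_left _ _).trans (min_le_left _ _)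
  have hκε : κ ≤ ε/3 := (min_le_left _ _).trans (min_le_right _ _)
  have hq : κ * q₀ ≤ 1/2 := by
    have h1 : κ ≤ 1/(2*(q₀+1)) := min_le_right _ _
    have h2 : κ * q₀ ≤ (1/(2*(q₀+1))) * q₀ := mul_le_mul_of_nonneg_right h1 hq₀0
    refine h2.trans ?_
    rw [div_mul_eq_mul_div, one_mul, div_le_div_iff₀ (by positivity) (by norm_num)]
    linarith
  -- apply the fixed point construction
  obtain ⟨Y, hYc, hYd, hYend, hYb⟩ := exists_cycle_arc g hg.continuous Aeq e he c hc hg0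
    (M:ℝ) r₀ M.coe_nonneg hr₀0 hTay κ hκ0 hκr hq
  set τ : ℝ := κ / c with hτdef
  have hτ0 : 0 < τ := div_pos hκ0 hc
  set δ : ℝ := κ + τ with hδdef
  have hκδ : κ < δ := by rw [hδdef]; linarith
  have hδ0 : 0 < δ := hκ0.trans hκδ
  haveI : Fact (0 < δ) := ⟨hδ0⟩
  -- the closed curve on [0, δ]
  set X : ℝ → E := fun t => Y (max t κ - κ) + (min t κ - κ) • e with hXdef
  have hXc : Continuous X := by
    apply Continuous.add
    · exact hYc.comp ((continuous_id.max continuous_const).sub continuous_const)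
    · exact ((continuous_id.min continuous_const).sub continuous_const).smul continuous_const
  have hXseg : ∀ t ≤ κ, X t = Y 0 + (t - κ) • e := by
    intro t htκ
    rw [hXdef]
    simp only
    rw [max_eq_right htκ, min_eq_left htκ, sub_self]
  have hXarc : ∀ t, κ ≤ t → X t = Y (t - κ) := by
    intro t htκ
    rw [hXdef]
    simp only
    rw [max_eq_left htκ, min_eq_right htκ, sub_self, zero_smul, add_zero]
  have hX0 : X 0 = Y τ := by
    rw [hXseg 0 hκ0.le, zero_sub, hYend, neg_smul, ← sub_eq_add_neg]
  have hXδ : X δ = Y τ := by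
    rw [hXarc δ hκδ.le]
    congr 1
    rw [hδdef]; ring
  have hXeq : X 0 = X δ := hX0.trans hXδ.symm
  -- periodic extension
  set x : ℝ → E := fun t => AddCircle.liftIco δ 0 X ↑t with hxdef
  have hxc : Continuous x := by
    have h1 : X 0 = X (0 + δ) := by rw [zero_add]; exact hXeq
    have h2 : ContinuousOn X (Icc 0 (0 + δ)) := by rw [zero_add]; exact hXc.continuousOn
    exact (AddCircle.liftIco_continuous h1 h2).comp (AddCircle.continuous_mk' δ)
  have hper : ∀ t, x (t + δ) = x t := by
    intro t
    rw [hxdef]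
    simp only
    rw [AddCircle.coe_add_period]
  have hxX : ∀ t ∈ Icc (0:ℝ) δ, x t = X t := by
    intro t ht
    rcases lt_or_eq_of_le ht.2 with h | h
    · exact AddCircle.liftIco_coe_apply ⟨ht.1, by rw [zero_add]; exact h⟩
    · have h1 : x δ = x 0 := by
        have := hper 0
        rwa [zero_add] at this
      have h2 : x 0 = X 0 :=
        AddCircle.liftIco_coe_apply ⟨le_refl _, by rw [zero_add]; exact hδ0⟩
      rw [h, h1, h2, hXeq]
  refine ⟨κ, δ, x, hκ0, hκδ, hxc, hper, ?_, ?_, ?_⟩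
  · -- derivative e on [0, κ]
    intro t ht
    have hbase : HasDerivAt (fun u : ℝ => Y 0 + (u - κ) • e) e t := by
      have h1 : HasDerivAt (fun u : ℝ => (u - κ) • e) ((1:ℝ) • e) t :=
        ((hasDerivAt_id t).sub_const κ).smul_const e
      rw [one_smul] at h1
      exact h1.const_add (Y 0)
    have hagree : ∀ u ∈ Icc (0:ℝ) κ, x u = Y 0 + (u - κ) • e := by
      intro u hu
      rw [hxX u ⟨hu.1, hu.2.trans hκδ.le⟩, hXseg u hu.2]
    exact (hbase.hasDerivWithinAt).congr hagree (hagree t ht)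
  · -- derivative g on [κ, δ]
    intro t ht
    have hmem : t - κ ∈ Icc (0:ℝ) τ := by
      constructor
      · linarith [ht.1]
      · have := ht.2
        rw [hδdef] at this
        linarith
    have hYder : HasDerivAt Y (g (Y (t - κ))) (t - κ) := hYd (t - κ) hmem
    have hshift : HasDerivAt (fun u : ℝ => u - κ) (1:ℝ) t := (hasDerivAt_id t).sub_const κ
    have hbase : HasDerivAt (fun u : ℝ => Y (u - κ)) (g (Y (t - κ))) t := by
      have := hYder.scomp t hshift
      rwa [one_smul] at this
    have hagree : ∀ u ∈ Icc κ δ, x u = Y (u - κ) := by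
      intro u hu
      rw [hxX u ⟨hκ0.le.trans hu.1, hu.2⟩, hXarc u hu.1]
    have hxt : x t = Y (t - κ) := hagree t ht
    rw [hxt]
    exact (hbase.hasDerivWithinAt).congr hagree hxt
  · -- norm bound
    intro t
    set uu : ↥(Ico (0:ℝ) (0 + δ)) := AddCircle.equivIco δ 0 ↑t with huu
    have hxt : x t = X uu.1 := rfl
    have hsmem : uu.1 ∈ Ico (0:ℝ) δ := by
      have h := uu.2
      exact ⟨h.1, lt_of_lt_of_le h.2 (le_of_eq (zero_add δ))⟩
    rw [hxt]
    set u := (uu.1 : ℝ) with hudef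
    have hκε3 : κ < ε := lt_of_le_of_lt hκε (by linarith)
    rcases le_or_gt u κ with h | h
    · rw [hXseg u h]
      have h1 : ‖Y 0‖ ≤ κ := hYb 0 ⟨le_refl _, hτ0.le⟩
      have h2 : ‖(u - κ) • e‖ ≤ κ := by
        rw [norm_smul, he, mul_one, Real.norm_eq_abs, abs_le]
        constructor <;> [linarith [hsmem.1]; linarith]
      calc ‖Y 0 + (u - κ) • e‖ ≤ ‖Y 0‖ + ‖(u - κ) • e‖ := norm_add_le _ _
        _ ≤ κ + κ := add_le_add h1 h2
        _ < ε := by linarith [lt_of_le_of_lt hκε (show ε/3 < ε/2 by linarith)]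
      
    · rw [hXarc u h.le]
      have hmem : u - κ ∈ Icc (0:ℝ) τ := by
        constructor
        · linarith
        · have := hsmem.2
          rw [hδdef] at this
          linarith
      exact lt_of_le_of_lt (hYb _ hmem) hκε3
end
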